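/- arXiv:1903.11582 — 3 statements merged into one kernel-verified Lean document; each statement's English description precedes it below -/
import Mathlib

section
/- In the continuous balance-point setting, assume in addition that G is continuous on [0, b₁) and on I₃. Then for every ε > 0: |T(v*(w*_{L,ε}), w*_{L,ε}; G) − T(v*, w*; G)| ≤ ε and |T(v*(w*_{R,ε}), w*_{R,ε}; G) − T(v*, w*; G)| ≤ ε. -/
open MeasureTheory Set Filter Topology

/-- `I_T = I₁ ∪ I₂ ∪ I₃ = (0,b₁) ∪ [b₁,b₂] ∪ (b₂,b₃)`, where `b₃` may be `+∞`. -/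
def ITset (b₁ b₂ : ℝ) (b₃ : EReal) : Set ℝ :=
  Ioo 0 b₁ ∪ Icc b₁ b₂ ∪ {y : ℝ | b₂ < y ∧ (y : EReal) < b₃}

/-- The conditioning set `[v,w] ∩ (I_T ∪ {0})` (with possibly infinite right endpoint). -/
def condSet (b₁ b₂ : ℝ) (b₃ : EReal) (v : ℝ) (w : EReal) : Set ℝ :=
  {y : ℝ | v ≤ y ∧ (y : EReal) ≤ w} ∩ (ITset b₁ b₂ b₃ ∪ {0})

/-- The conditional expectation `T(v,w;G) = E[G(Y) | Y ∈ [v,w] ∩ (I_T ∪ {0})]`,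
where `μ` is the law of `Y`. -/
noncomputable def condT (b₁ b₂ : ℝ) (b₃ : EReal) (G : ℝ → ℝ) (μ : Measure ℝ)
    (v : ℝ) (w : EReal) : ℝ :=
  (∫ y in condSet b₁ b₂ b₃ v w, G y ∂μ) / (μ (condSet b₁ b₂ b₃ v w)).toReal

/-- `V_{R,ε}(w) = {v ∈ I₁ : T(v,w;G) < G(v⁻) − ε}`. -/
noncomputable def VR (b₁ b₂ : ℝ) (b₃ : EReal) (G : ℝ → ℝ) (μ : Measure ℝ)
    (ε : ℝ) (w : EReal) : Set ℝ :=
  {v | v ∈ Ioo 0 b₁ ∧ condT b₁ b₂ b₃ G μ v w < Function.leftLim G v - ε}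

open Classical in
/-- `v*_{R,ε}(w)`. -/
noncomputable def vstarR (b₁ b₂ : ℝ) (b₃ : EReal) (G : ℝ → ℝ) (μ : Measure ℝ)
    (ε : ℝ) (w : EReal) : ℝ :=
  if (VR b₁ b₂ b₃ G μ ε w).Nonempty then sInf (VR b₁ b₂ b₃ G μ ε w) else b₁

/-- The left balance point `v*(w) = v*_{R,0}(w)`. -/
noncomputable def vstar (b₁ b₂ : ℝ) (b₃ : EReal) (G : ℝ → ℝ) (μ : Measure ℝ)
    (w : EReal) : ℝ :=
  vstarR b₁ b₂ b₃ G μ 0 w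

/-- `W_{L,ε} = {w ∈ I₃ : T(v*(w),w;G) > G(w⁺) + ε}`. -/
noncomputable def WL (b₁ b₂ : ℝ) (b₃ : EReal) (G : ℝ → ℝ) (μ : Measure ℝ)
    (ε : ℝ) : Set ℝ :=
  {w : ℝ | (b₂ < w ∧ (w : EReal) < b₃) ∧
    Function.rightLim G w + ε < condT b₁ b₂ b₃ G μ (vstar b₁ b₂ b₃ G μ w) w}

open Classical in
/-- `w*_{L,ε}` (an extended real, since `W_{L,ε}` may be unbounded when `b₃ = ∞`). -/
noncomputable def wstarL (b₁ b₂ : ℝ) (b₃ : EReal) (G : ℝ → ℝ) (μ : Measure ℝ)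
    (ε : ℝ) : EReal :=
  if (WL b₁ b₂ b₃ G μ ε).Nonempty
  then sSup ((fun x : ℝ => (x : EReal)) '' WL b₁ b₂ b₃ G μ ε)
  else (b₂ : EReal)

/-- The right balance point `w* = w*_{L,0}`. -/
noncomputable def wstar (b₁ b₂ : ℝ) (b₃ : EReal) (G : ℝ → ℝ) (μ : Measure ℝ) : EReal :=
  wstarL b₁ b₂ b₃ G μ 0

/-- `v* = v*(w*)`. -/
noncomputable def vstarstar (b₁ b₂ : ℝ) (b₃ : EReal) (G : ℝ → ℝ) (μ : Measure ℝ) : ℝ :=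
  vstar b₁ b₂ b₃ G μ (wstar b₁ b₂ b₃ G μ)

/-- `W_{R,ε} = {w ∈ I₃ : G(w) > T(v*,w*;G) + ε}`. -/
noncomputable def WR (b₁ b₂ : ℝ) (b₃ : EReal) (G : ℝ → ℝ) (μ : Measure ℝ)
    (ε : ℝ) : Set ℝ :=
  {w : ℝ | (b₂ < w ∧ (w : EReal) < b₃) ∧
    condT b₁ b₂ b₃ G μ (vstarstar b₁ b₂ b₃ G μ) (wstar b₁ b₂ b₃ G μ) + ε < G w}

open Classical in
/-- `w*_{R,ε}` (equal to `b₃`, possibly infinite, when `W_{R,ε} = ∅`). -/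
noncomputable def wstarR (b₁ b₂ : ℝ) (b₃ : EReal) (G : ℝ → ℝ) (μ : Measure ℝ)
    (ε : ℝ) : EReal :=
  if (WR b₁ b₂ b₃ G μ ε).Nonempty then ((sInf (WR b₁ b₂ b₃ G μ ε) : ℝ) : EReal) else b₃

section Aux

variable {b₁ b₂ : ℝ} {b₃ : EReal} {G : ℝ → ℝ} {μ : Measure ℝ}

lemma ITset_measurable : MeasurableSet (ITset b₁ b₂ b₃) := by
  unfold ITset
  refine ((measurableSet_Ioo.union measurableSet_Icc).union ?_)
  have : {y : ℝ | b₂ < y ∧ (y : EReal) < b₃}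
      = Ioi b₂ ∩ ((fun y : ℝ => (y : EReal)) ⁻¹' Iio b₃) := rfl
  rw [this]
  exact measurableSet_Ioi.inter (measurable_coe_real_ereal measurableSet_Iio)

lemma condSet_measurable (v : ℝ) (w : EReal) :
    MeasurableSet (condSet b₁ b₂ b₃ v w) := by
  unfold condSet
  refine MeasurableSet.inter ?_ (ITset_measurable.union (measurableSet_singleton 0))
  have : {y : ℝ | v ≤ y ∧ (y : EReal) ≤ w}
      = Ici v ∩ ((fun y : ℝ => (y : EReal)) ⁻¹' Iic w) := rfl
  rw [this]
  exact measurableSet_Ici.inter (measurable_coe_real_ereal measurableSet_Iic)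

lemma condSet_mono_right {v : ℝ} {w w' : EReal} (h : w ≤ w') :
    condSet b₁ b₂ b₃ v w ⊆ condSet b₁ b₂ b₃ v w' :=
  fun _ hx => ⟨⟨hx.1.1, le_trans hx.1.2 h⟩, hx.2⟩

lemma condSet_anti_left {v u : ℝ} {w : EReal} (h : v ≤ u) :
    condSet b₁ b₂ b₃ u w ⊆ condSet b₁ b₂ b₃ v w :=
  fun _ hx => ⟨⟨le_trans h hx.1.1, hx.1.2⟩, hx.2⟩

lemma Ioo_subset_condSet (hb₁₂ : b₁ < b₂) {v : ℝ} {w : EReal}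
    (hv : v ≤ b₁) (hw : (b₂ : EReal) ≤ w) :
    Ioo b₁ b₂ ⊆ condSet b₁ b₂ b₃ v w := by
  intro y hy
  refine ⟨⟨le_trans hv hy.1.le, le_trans ?_ hw⟩, Or.inl (Or.inl (Or.inr ⟨hy.1.le, hy.2.le⟩))⟩
  exact_mod_cast hy.2.le

lemma condSet_pos (hb₁₂ : b₁ < b₂)
    (hfull : ∀ a b : ℝ, a < b → Ioo a b ⊆ ITset b₁ b₂ b₃ → 0 < μ (Ioo a b))
    {v : ℝ} {w : EReal} (hv : v ≤ b₁) (hw : (b₂ : EReal) ≤ w) :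
    0 < μ (condSet b₁ b₂ b₃ v w) := by
  refine lt_of_lt_of_le (hfull b₁ b₂ hb₁₂ ?_) (measure_mono (Ioo_subset_condSet hb₁₂ hv hw))
  intro y hy; exact Or.inl (Or.inr ⟨hy.1.le, hy.2.le⟩)

end Aux
section Mean

variable {μ : Measure ℝ} {G : ℝ → ℝ}

/-- Splitting a mean: if `G ≤ c` on `B \ A` then the mean over `B` is at most
`max (mean over A) c`. -/
lemma mean_le_max {A B : Set ℝ} (hA : MeasurableSet A) (hB : MeasurableSet B)
    (hAB : A ⊆ B) (hposA : 0 < μ A) (hfin : μ B ≠ ⊤) (hint : Integrable G μ)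
    {c : ℝ} (hc : ∀ x ∈ B \ A, G x ≤ c) :
    (∫ x in B, G x ∂μ) / (μ B).toReal
      ≤ max ((∫ x in A, G x ∂μ) / (μ A).toReal) c := by
  have hfinA : μ A ≠ ⊤ := fun h => hfin (top_le_iff.1 (h ▸ measure_mono hAB))
  have hfinD : μ (B \ A) ≠ ⊤ := fun h => hfin (top_le_iff.1 (h ▸ measure_mono Set.diff_subset))
  set a := (μ A).toReal with ha
  set d := (μ (B \ A)).toReal with hd
  have hapos : 0 < a := ENNReal.toReal_pos hposA.ne' hfinA
  have hdpos : 0 ≤ d := ENNReal.toReal_nonneg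
  have hDmeas : MeasurableSet (B \ A) := hB.diff hA
  have hBsplit : B = A ∪ (B \ A) := (Set.union_diff_cancel hAB).symm
  have hdisj : Disjoint A (B \ A) := Set.disjoint_sdiff_right
  have hIsplit : ∫ x in B, G x ∂μ = (∫ x in A, G x ∂μ) + ∫ x in B \ A, G x ∂μ := by
    have h := setIntegral_union (μ := μ) (f := G) hdisj hDmeas hint.integrableOn
      hint.integrableOn
    rwa [← hBsplit] at h
  have hMsplit : (μ B).toReal = a + d := by
    rw [hBsplit, measure_union hdisj hDmeas, ENNReal.toReal_add hfinA hfinD]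
  have hDle : ∫ x in B \ A, G x ∂μ ≤ c * d := by
    calc ∫ x in B \ A, G x ∂μ ≤ ∫ _x in B \ A, c ∂μ := by
          refine setIntegral_mono_on hint.integrableOn
            (integrableOn_const hfinD) hDmeas hc
      _ = c * d := by rw [setIntegral_const]; rw [smul_eq_mul, mul_comm]; rfl
  set m := max ((∫ x in A, G x ∂μ) / a) c with hm
  have hIA : ∫ x in A, G x ∂μ ≤ m * a := by
    have : (∫ x in A, G x ∂μ) / a ≤ m := le_max_left _ _
    calc ∫ x in A, G x ∂μ = ((∫ x in A, G x ∂μ) / a) * a := by field_simp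
      _ ≤ m * a := mul_le_mul_of_nonneg_right this hapos.le
  have hcd : c * d ≤ m * d := mul_le_mul_of_nonneg_right (le_max_right _ _) hdpos
  rw [hIsplit, hMsplit, div_le_iff₀ (by linarith)]
  calc (∫ x in A, G x ∂μ) + ∫ x in B \ A, G x ∂μ ≤ m * a + c * d := by linarith [hDle]
    _ ≤ m * (a + d) := by nlinarith
  
/-- Symmetric version: if `G ≥ c` on `B \ A` then the mean over `B` is at least
`min (mean over A) c`. -/
lemma min_le_mean {A B : Set ℝ} (hA : MeasurableSet A) (hB : MeasurableSet B)
    (hAB : A ⊆ B) (hposA : 0 < μ A) (hfin : μ B ≠ ⊤) (hint : Integrable G μ)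
    {c : ℝ} (hc : ∀ x ∈ B \ A, c ≤ G x) :
    min ((∫ x in A, G x ∂μ) / (μ A).toReal) c
      ≤ (∫ x in B, G x ∂μ) / (μ B).toReal := by
  have h := mean_le_max (G := fun x => -G x) hA hB hAB hposA hfin hint.neg
    (c := -c) (fun x hx => neg_le_neg (hc x hx))
  simp only [integral_neg, neg_div, max_neg_neg] at h
  · linarith [h]
  
end Mean

section Tendsto

variable {μ : Measure ℝ}

lemma tendsto_setIntegral_of_eventually (f : ℝ → ℝ) (hf : Integrable f μ)
    (Bn : ℕ → Set ℝ) (B : Set ℝ) (hm : ∀ n, MeasurableSet (Bn n))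
    (hmB : MeasurableSet B)
    (hpt : ∀ x, ∀ᶠ n in atTop, (x ∈ Bn n ↔ x ∈ B)) :
    Tendsto (fun n => ∫ x in Bn n, f x ∂μ) atTop (𝓝 (∫ x in B, f x ∂μ)) := by
  have h1 : ∀ n, ∫ x in Bn n, f x ∂μ = ∫ x, (Bn n).indicator f x ∂μ := fun n =>
    (integral_indicator (hm n)).symm
  have h2 : ∫ x in B, f x ∂μ = ∫ x, B.indicator f x ∂μ := (integral_indicator hmB).symm
  simp only [h1, h2]
  refine tendsto_integral_of_dominated_convergence (fun x => ‖f x‖)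
    (fun n => hf.1.indicator (hm n)) hf.norm ?_ ?_
  · intro n
    filter_upwards with x using norm_indicator_le_norm_self f x
  · filter_upwards with x
    refine Filter.Tendsto.congr' ?_ tendsto_const_nhds
    filter_upwards [hpt x] with n hn
    by_cases hx : x ∈ B
    · simp [Set.indicator_of_mem hx, Set.indicator_of_mem (hn.2 hx)]
    · simp [Set.indicator_of_notMem hx, Set.indicator_of_notMem (fun h => hx (hn.1 h))]

lemma tendsto_measure_toReal_of_eventually [IsFiniteMeasure μ]
    (Bn : ℕ → Set ℝ) (B : Set ℝ) (hm : ∀ n, MeasurableSet (Bn n))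
    (hmB : MeasurableSet B)
    (hpt : ∀ x, ∀ᶠ n in atTop, (x ∈ Bn n ↔ x ∈ B)) :
    Tendsto (fun n => (μ (Bn n)).toReal) atTop (𝓝 ((μ B).toReal)) := by
  have h := tendsto_setIntegral_of_eventually (μ := μ) (fun _ => (1 : ℝ)) (integrable_const 1)
    Bn B hm hmB hpt
  simpa [setIntegral_const, Measure.real] using h

end Tendsto
section GHelpers

variable {b₁ b₂ : ℝ} {b₃ : EReal} {G : ℝ → ℝ}

lemma seq_tendsto_of_continuousOn {s : Set ℝ} {f : ℝ → ℝ} (hf : ContinuousOn f s)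
    {v : ℝ} (hv : v ∈ s) {u : ℕ → ℝ} (hin : ∀ n, u n ∈ s)
    (hu : Tendsto u atTop (𝓝 v)) : Tendsto (fun n => f (u n)) atTop (𝓝 (f v)) :=
  (hf v hv).tendsto.comp
    (tendsto_nhdsWithin_of_tendsto_nhds_of_eventually_within u hu
      (Filter.Eventually.of_forall hin))

lemma I3_isOpen : IsOpen {y : ℝ | b₂ < y ∧ (y : EReal) < b₃} := by
  have : {y : ℝ | b₂ < y ∧ (y : EReal) < b₃}
      = Ioi b₂ ∩ ((fun y : ℝ => (y : EReal)) ⁻¹' Iio b₃) := rfl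
  rw [this]
  exact isOpen_Ioi.inter (isOpen_Iio.preimage continuous_coe_real_ereal)

lemma leftLim_eq_G (hGc1 : ContinuousOn G (Ico 0 b₁)) {v : ℝ} (hv : v ∈ Ioo 0 b₁) :
    Function.leftLim G v = G v := by
  have hcont : ContinuousAt G v := by
    refine hGc1.continuousAt (mem_nhds_iff.2 ⟨Ioo 0 b₁, Ioo_subset_Ico_self, isOpen_Ioo, hv⟩)
  exact leftLim_eq_of_tendsto
    (hcont.tendsto.mono_left nhdsWithin_le_nhds)

lemma rightLim_eq_G (hGc3 : ContinuousOn G {y : ℝ | b₂ < y ∧ (y : EReal) < b₃})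
    {w : ℝ} (hw : b₂ < w ∧ (w : EReal) < b₃) :
    Function.rightLim G w = G w := by
  have hcont : ContinuousAt G w :=
    hGc3.continuousAt (I3_isOpen.mem_nhds hw)
  exact rightLim_eq_of_tendsto
    (hcont.tendsto.mono_left nhdsWithin_le_nhds)

lemma G0_le (hG1 : MonotoneOn G (Ioo 0 b₁)) (hGc1 : ContinuousOn G (Ico 0 b₁))
    {u : ℝ} (hu : u ∈ Ioo 0 b₁) : G 0 ≤ G u := by
  set z : ℕ → ℝ := fun n => u / (n + 2) with hz
  have hzmem : ∀ n, z n ∈ Ioo 0 b₁ := by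
    intro n
    constructor
    · have := hu.1; positivity
    · have h2 : z n < u := by
        rw [hz]
        rw [div_lt_iff₀ (by positivity)]
        nlinarith [hu.1]
      exact h2.trans hu.2
  have hz0 : Tendsto z atTop (𝓝 0) := by
    refine Filter.Tendsto.div_atTop (tendsto_const_nhds) ?_
    exact tendsto_atTop_add_const_right atTop 2 tendsto_natCast_atTop_atTop
  have hle : ∀ n, G (z n) ≤ G u := fun n =>
    hG1 (hzmem n) hu (by
      have : z n < u := by
        rw [hz, div_lt_iff₀ (by positivity)]
        nlinarith [hu.1]
      exact this.le)
  have htend : Tendsto (fun n => G (z n)) atTop (𝓝 (G 0)) :=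
    seq_tendsto_of_continuousOn hGc1 ⟨le_refl 0, hu.1.trans hu.2⟩
      (fun n => ⟨(hzmem n).1.le, (hzmem n).2⟩) hz0
  exact le_of_tendsto htend (Filter.Eventually.of_forall hle)

end GHelpers

section DiffChar

variable {b₁ b₂ : ℝ} {b₃ : EReal}

lemma diff_char_right (hb₁ : 0 ≤ b₁) (hb₁₂ : b₁ < b₂) {v : ℝ} {w w' : EReal}
    (hw : (b₂ : EReal) ≤ w) {x : ℝ}
    (hx : x ∈ condSet b₁ b₂ b₃ v w' \ condSet b₁ b₂ b₃ v w) :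
    (b₂ < x ∧ (x : EReal) < b₃) ∧ w < (x : EReal) ∧ (x : EReal) ≤ w' := by
  obtain ⟨⟨⟨hvx, hxw'⟩, hIT⟩, hnot⟩ := hx
  have hxw : w < (x : EReal) := by
    by_contra h
    exact hnot ⟨⟨hvx, not_lt.1 h⟩, hIT⟩
  have hb₂x : b₂ < x := by
    have : (b₂ : EReal) < (x : EReal) := lt_of_le_of_lt hw hxw
    exact_mod_cast this
  rcases hIT with (((h | h) | h)) | h
  · exact absurd (h.2.trans hb₁₂) (not_lt.2 hb₂x.le)
  · exact absurd h.2 (not_le.2 hb₂x)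
  · exact ⟨h, hxw, hxw'⟩
  · rw [Set.mem_singleton_iff] at h
    subst h
    exact absurd (hb₁.trans_lt hb₁₂) (not_lt.2 hb₂x.le)

lemma diff_char_left (hb₁₂ : b₁ < b₂) {v u : ℝ} (hu : u ≤ b₁) {w : EReal} {x : ℝ}
    (hx : x ∈ condSet b₁ b₂ b₃ v w \ condSet b₁ b₂ b₃ u w) :
    (x = 0 ∨ x ∈ Ioo 0 b₁) ∧ v ≤ x ∧ x < u := by
  obtain ⟨⟨⟨hvx, hxw⟩, hIT⟩, hnot⟩ := hx
  have hxu : x < u := by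
    by_contra h
    exact hnot ⟨⟨not_lt.1 h, hxw⟩, hIT⟩
  rcases hIT with (((h | h) | h)) | h
  · exact ⟨Or.inr h, hvx, hxu⟩
  · exact absurd (hxu.trans_le hu) (not_lt.2 h.1)
  · exact absurd ((hxu.trans_le hu).trans hb₁₂) (not_lt.2 h.1.le)
  · exact ⟨Or.inl h, hvx, hxu⟩

end DiffChar
section CondTLemmas

variable {b₁ b₂ : ℝ} {b₃ : EReal} {G : ℝ → ℝ} {μ : Measure ℝ}

lemma condT_le_max_right (hb₁ : 0 ≤ b₁) (hb₁₂ : b₁ < b₂)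
    (hμ : IsProbabilityMeasure μ)
    (hfull : ∀ a b : ℝ, a < b → Ioo a b ⊆ ITset b₁ b₂ b₃ → 0 < μ (Ioo a b))
    (hGint : Integrable G μ) {v : ℝ} {w w' : EReal} {c : ℝ}
    (hv : v ≤ b₁) (hw : (b₂ : EReal) ≤ w) (hww' : w ≤ w')
    (hc : ∀ y : ℝ, (b₂ < y ∧ (y : EReal) < b₃) → w < (y : EReal) →
      (y : EReal) ≤ w' → G y ≤ c) :
    condT b₁ b₂ b₃ G μ v w' ≤ max (condT b₁ b₂ b₃ G μ v w) c := by
  haveI := hμ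
  unfold condT
  refine mean_le_max (condSet_measurable v w) (condSet_measurable v w')
    (condSet_mono_right hww') (condSet_pos hb₁₂ hfull hv hw) (measure_ne_top μ _)
    hGint ?_
  intro x hx
  obtain ⟨h1, h2, h3⟩ := diff_char_right hb₁ hb₁₂ hw hx
  exact hc x h1 h2 h3

lemma min_le_condT_right (hb₁ : 0 ≤ b₁) (hb₁₂ : b₁ < b₂)
    (hμ : IsProbabilityMeasure μ)
    (hfull : ∀ a b : ℝ, a < b → Ioo a b ⊆ ITset b₁ b₂ b₃ → 0 < μ (Ioo a b))
    (hGint : Integrable G μ) {v : ℝ} {w w' : EReal} {c : ℝ}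
    (hv : v ≤ b₁) (hw : (b₂ : EReal) ≤ w) (hww' : w ≤ w')
    (hc : ∀ y : ℝ, (b₂ < y ∧ (y : EReal) < b₃) → w < (y : EReal) →
      (y : EReal) ≤ w' → c ≤ G y) :
    min (condT b₁ b₂ b₃ G μ v w) c ≤ condT b₁ b₂ b₃ G μ v w' := by
  haveI := hμ
  unfold condT
  refine min_le_mean (condSet_measurable v w) (condSet_measurable v w')
    (condSet_mono_right hww') (condSet_pos hb₁₂ hfull hv hw) (measure_ne_top μ _)
    hGint ?_
  intro x hx
  obtain ⟨h1, h2, h3⟩ := diff_char_right hb₁ hb₁₂ hw hx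
  exact hc x h1 h2 h3

lemma condT_le_max_left (hb₁₂ : b₁ < b₂)
    (hμ : IsProbabilityMeasure μ)
    (hfull : ∀ a b : ℝ, a < b → Ioo a b ⊆ ITset b₁ b₂ b₃ → 0 < μ (Ioo a b))
    (hGint : Integrable G μ) {v u : ℝ} {w : EReal} {c : ℝ}
    (hvu : v ≤ u) (hu : u ≤ b₁) (hw : (b₂ : EReal) ≤ w)
    (hc : ∀ y : ℝ, (y = 0 ∨ y ∈ Ioo 0 b₁) → v ≤ y → y < u → G y ≤ c) :
    condT b₁ b₂ b₃ G μ v w ≤ max (condT b₁ b₂ b₃ G μ u w) c := by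
  haveI := hμ
  unfold condT
  refine mean_le_max (condSet_measurable u w) (condSet_measurable v w)
    (condSet_anti_left hvu) (condSet_pos hb₁₂ hfull hu hw) (measure_ne_top μ _)
    hGint ?_
  intro x hx
  obtain ⟨h1, h2, h3⟩ := diff_char_left hb₁₂ hu hx
  exact hc x h1 h2 h3

lemma min_le_condT_left (hb₁₂ : b₁ < b₂)
    (hμ : IsProbabilityMeasure μ)
    (hfull : ∀ a b : ℝ, a < b → Ioo a b ⊆ ITset b₁ b₂ b₃ → 0 < μ (Ioo a b))
    (hGint : Integrable G μ) {v u : ℝ} {w : EReal} {c : ℝ}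
    (hvu : v ≤ u) (hu : u ≤ b₁) (hw : (b₂ : EReal) ≤ w)
    (hc : ∀ y : ℝ, (y = 0 ∨ y ∈ Ioo 0 b₁) → v ≤ y → y < u → c ≤ G y) :
    min (condT b₁ b₂ b₃ G μ u w) c ≤ condT b₁ b₂ b₃ G μ v w := by
  haveI := hμ
  unfold condT
  refine min_le_mean (condSet_measurable u w) (condSet_measurable v w)
    (condSet_anti_left hvu) (condSet_pos hb₁₂ hfull hu hw) (measure_ne_top μ _)
    hGint ?_
  intro x hx
  obtain ⟨h1, h2, h3⟩ := diff_char_left hb₁₂ hu hx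
  exact hc x h1 h2 h3

lemma tendsto_condT (hb₁₂ : b₁ < b₂)
    (hμ : IsProbabilityMeasure μ)
    (hfull : ∀ a b : ℝ, a < b → Ioo a b ⊆ ITset b₁ b₂ b₃ → 0 < μ (Ioo a b))
    (hGint : Integrable G μ) {vn : ℕ → ℝ} {wn : ℕ → EReal} {v : ℝ} {w : EReal}
    (hv : v ≤ b₁) (hw : (b₂ : EReal) ≤ w)
    (hpt : ∀ x : ℝ, ∀ᶠ n in atTop,
      (x ∈ condSet b₁ b₂ b₃ (vn n) (wn n) ↔ x ∈ condSet b₁ b₂ b₃ v w)) :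
    Tendsto (fun n => condT b₁ b₂ b₃ G μ (vn n) (wn n)) atTop
      (𝓝 (condT b₁ b₂ b₃ G μ v w)) := by
  haveI := hμ
  have hnum := tendsto_setIntegral_of_eventually (μ := μ) G hGint
    (fun n => condSet b₁ b₂ b₃ (vn n) (wn n)) (condSet b₁ b₂ b₃ v w)
    (fun n => condSet_measurable _ _) (condSet_measurable v w) hpt
  have hden := tendsto_measure_toReal_of_eventually (μ := μ)
    (fun n => condSet b₁ b₂ b₃ (vn n) (wn n)) (condSet b₁ b₂ b₃ v w)
    (fun n => condSet_measurable _ _) (condSet_measurable v w) hpt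
  have hpos : (0 : ℝ) < (μ (condSet b₁ b₂ b₃ v w)).toReal :=
    ENNReal.toReal_pos (condSet_pos hb₁₂ hfull hv hw).ne' (measure_ne_top μ _)
  exact hnum.div hden hpos.ne'

lemma vstar_nonneg (hb₁ : 0 ≤ b₁) (w : EReal) : 0 ≤ vstar b₁ b₂ b₃ G μ w := by
  unfold vstar vstarR
  split_ifs with h
  · exact le_csInf h (fun x hx => hx.1.1.le)
  · exact hb₁

lemma vstar_le (hb₁ : 0 ≤ b₁) (w : EReal) : vstar b₁ b₂ b₃ G μ w ≤ b₁ := by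
  unfold vstar vstarR
  split_ifs with h
  · obtain ⟨x, hx⟩ := h
    exact le_trans (csInf_le ⟨0, fun y hy => hy.1.1.le⟩ hx) hx.1.2.le
  · exact le_refl _

lemma ge_of_lt_vstar (hGc1 : ContinuousOn G (Ico 0 b₁)) {w : EReal} {u : ℝ}
    (hu : u ∈ Ioo 0 b₁) (hlt : u < vstar b₁ b₂ b₃ G μ w) :
    G u ≤ condT b₁ b₂ b₃ G μ u w := by
  have hnot : u ∉ VR b₁ b₂ b₃ G μ 0 w := by
    intro hmem
    unfold vstar vstarR at hlt
    rw [if_pos ⟨u, hmem⟩] at hlt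
    exact absurd (csInf_le ⟨0, fun y hy => hy.1.1.le⟩ hmem) (not_le.2 hlt)
  by_contra h
  exact hnot ⟨hu, by rw [leftLim_eq_G hGc1 hu, sub_zero]; linarith⟩

end CondTLemmas
section ClaimA

variable {b₁ b₂ : ℝ} {b₃ : EReal} {G : ℝ → ℝ} {μ : Measure ℝ}

/-- Monotonicity of `T(·,w)` below `v*(w)`. -/
lemma condT_mono_below (hb₁ : 0 ≤ b₁) (hb₁₂ : b₁ < b₂)
    (hμ : IsProbabilityMeasure μ)
    (hfull : ∀ a b : ℝ, a < b → Ioo a b ⊆ ITset b₁ b₂ b₃ → 0 < μ (Ioo a b))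
    (hGint : Integrable G μ) (hG1 : MonotoneOn G (Ioo 0 b₁))
    (hGc1 : ContinuousOn G (Ico 0 b₁)) {w : EReal} (hw : (b₂ : EReal) ≤ w)
    {vv v' : ℝ} (hvv : 0 ≤ vv) (hvv' : vv ≤ v') (hv' : v' ≤ vstar b₁ b₂ b₃ G μ w) :
    condT b₁ b₂ b₃ G μ vv w ≤ condT b₁ b₂ b₃ G μ v' w := by
  by_contra hcon
  push_neg at hcon
  set c := condT b₁ b₂ b₃ G μ vv w with hc
  set S := {u : ℝ | u ∈ Icc vv v' ∧ condT b₁ b₂ b₃ G μ u w < c} with hS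
  have hv'b₁ : v' ≤ b₁ := hv'.trans (vstar_le hb₁ w)
  have hSne : S.Nonempty := ⟨v', ⟨⟨hvv', le_refl _⟩, hcon⟩⟩
  have hbdd : BddBelow S := ⟨vv, fun u hu => hu.1.1⟩
  set s := sInf S with hs
  have hvs : vv ≤ s := le_csInf hSne (fun u hu => hu.1.1)
  have hsv' : s ≤ v' := csInf_le hbdd ⟨⟨hvv', le_refl _⟩, hcon⟩
  -- c ≤ T s
  have key2 : c ≤ condT b₁ b₂ b₃ G μ s w := by
    rcases eq_or_lt_of_le hvs with heq | hlt
    · rw [← heq]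
    · set u : ℕ → ℝ := fun n => s - (s - vv) / (n + 2) with hu
      have hds : ∀ n : ℕ, 0 < (s - vv) / ((n : ℝ) + 2) := by
        intro n; have : (0:ℝ) < s - vv := by linarith
        positivity
      have humem : ∀ n, u n ∈ Ico vv s := by
        intro n
        constructor
        · have h1 : (s - vv) / ((n : ℝ) + 2) ≤ s - vv := by
            rw [div_le_iff₀ (by positivity)]
            nlinarith [hds n]
          simp only [hu]; linarith
        · simp only [hu]; linarith [hds n]
      have hutend : Tendsto u atTop (𝓝 s) := by
        have h0 : Tendsto (fun n : ℕ => (s - vv) / ((n : ℝ) + 2)) atTop (𝓝 0) :=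
          Filter.Tendsto.div_atTop tendsto_const_nhds
            (tendsto_atTop_add_const_right atTop 2 tendsto_natCast_atTop_atTop)
        have h1 : Tendsto (fun n : ℕ => s - (s - vv) / ((n : ℝ) + 2)) atTop
            (𝓝 (s - 0)) := Tendsto.sub tendsto_const_nhds h0
        simpa using h1
      have hTn : ∀ n, c ≤ condT b₁ b₂ b₃ G μ (u n) w := by
        intro n
        by_contra hn
        push_neg at hn
        have : u n ∈ S := ⟨⟨(humem n).1, ((humem n).2.trans_le hsv').le⟩, hn⟩
        exact absurd (csInf_le hbdd this) (not_le.2 (humem n).2)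
      have htt : Tendsto (fun n => condT b₁ b₂ b₃ G μ (u n) w) atTop
          (𝓝 (condT b₁ b₂ b₃ G μ s w)) := by
        refine tendsto_condT hb₁₂ hμ hfull hGint (hsv'.trans hv'b₁) hw ?_
        intro x
        rcases le_or_gt s x with hx | hx
        · filter_upwards with n
          constructor
          · exact fun h => ⟨⟨hx, h.1.2⟩, h.2⟩
          · exact fun h => ⟨⟨(humem n).2.le.trans hx, h.1.2⟩, h.2⟩
        · filter_upwards [hutend.eventually (eventually_gt_nhds hx)] with n hn
          constructor
          · exact fun h => absurd h.1.1 (not_le.2 hn)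
          · exact fun h => absurd h.1.1 (not_le.2 hx)
      exact ge_of_tendsto htt (Filter.Eventually.of_forall hTn)
  have hsltv' : s < v' := by
    rcases eq_or_lt_of_le hsv' with heq | hlt
    · exfalso; rw [heq] at key2; linarith
    · exact hlt
  -- pick u ∈ S with s < u < v'
  obtain ⟨u, huS, huv'⟩ := (csInf_lt_iff hbdd hSne).1 hsltv'
  have hsu : s < u := by
    have hle : s ≤ u := csInf_le hbdd huS
    rcases eq_or_lt_of_le hle with heq | hlt
    · exfalso
      rw [heq] at key2
      exact absurd huS.2 (not_lt.2 key2)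
    · exact hlt
  have hu01 : u ∈ Ioo 0 b₁ :=
    ⟨lt_of_le_of_lt (hvv.trans hvs) hsu, lt_of_lt_of_le huv' hv'b₁⟩
  have hGuTu : G u ≤ condT b₁ b₂ b₃ G μ u w :=
    ge_of_lt_vstar hGc1 hu01 (lt_of_lt_of_le huv' hv')
  have happ : condT b₁ b₂ b₃ G μ s w ≤ max (condT b₁ b₂ b₃ G μ u w) (G u) := by
    refine condT_le_max_left hb₁₂ hμ hfull hGint hsu.le hu01.2.le hw ?_
    intro y hy _ hyu
    rcases hy with rfl | hy
    · exact G0_le hG1 hGc1 hu01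
    · exact hG1 hy hu01 hyu.le
  rw [max_eq_left hGuTu] at happ
  have : condT b₁ b₂ b₃ G μ u w < c := huS.2
  linarith [key2, happ]

end ClaimA
section ClaimA2

variable {b₁ b₂ : ℝ} {b₃ : EReal} {G : ℝ → ℝ} {μ : Measure ℝ}

/-- `v*(w)` maximizes `T(·, w)` over `[0, b₁]`. -/
lemma claimA (hb₁ : 0 ≤ b₁) (hb₁₂ : b₁ < b₂)
    (hμ : IsProbabilityMeasure μ)
    (hfull : ∀ a b : ℝ, a < b → Ioo a b ⊆ ITset b₁ b₂ b₃ → 0 < μ (Ioo a b))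
    (hGint : Integrable G μ) (hG1 : MonotoneOn G (Ioo 0 b₁))
    (hGc1 : ContinuousOn G (Ico 0 b₁)) {w : EReal} (hw : (b₂ : EReal) ≤ w)
    {v : ℝ} (hv0 : 0 ≤ v) (hvb : v ≤ b₁) :
    condT b₁ b₂ b₃ G μ v w ≤ condT b₁ b₂ b₃ G μ (vstar b₁ b₂ b₃ G μ w) w := by
  haveI := hμ
  set v0 := vstar b₁ b₂ b₃ G μ w with hv0def
  rcases le_or_gt v v0 with hle | hgt
  · exact condT_mono_below hb₁ hb₁₂ hμ hfull hGint hG1 hGc1 hw hv0 hle (le_refl _)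
  -- v0 < v : the "above the infimum" case
  have hne : (VR b₁ b₂ b₃ G μ 0 w).Nonempty := by
    by_contra hemp
    have : v0 = b₁ := by
      rw [hv0def]; unfold vstar vstarR; rw [if_neg hemp]
    rw [this] at hgt
    exact absurd hvb (not_le.2 hgt)
  have hv0inf : v0 = sInf (VR b₁ b₂ b₃ G μ 0 w) := by
    rw [hv0def]; unfold vstar vstarR; rw [if_pos hne]
  have hbdd : BddBelow (VR b₁ b₂ b₃ G μ 0 w) := ⟨0, fun y hy => hy.1.1.le⟩
  -- step1 : for u ∈ VR with u < v, T v ≤ T u < G u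
  have step1 : ∀ u ∈ VR b₁ b₂ b₃ G μ 0 w, u < v →
      condT b₁ b₂ b₃ G μ v w ≤ condT b₁ b₂ b₃ G μ u w ∧
      condT b₁ b₂ b₃ G μ u w < G u := by
    intro u huVR huv
    have hu01 : u ∈ Ioo 0 b₁ := huVR.1
    have hTuGu : condT b₁ b₂ b₃ G μ u w < G u := by
      have := huVR.2
      rwa [leftLim_eq_G hGc1 hu01, sub_zero] at this
    have hmin : min (condT b₁ b₂ b₃ G μ v w) (G u)
        ≤ condT b₁ b₂ b₃ G μ u w := by
      refine min_le_condT_left hb₁₂ hμ hfull hGint huv.le hvb hw ?_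
      intro y hy huy hyv
      rcases hy with rfl | hy
      · exact absurd huy (not_le.2 hu01.1)
      · exact hG1 hu01 hy huy
    constructor
    · rcases min_cases (condT b₁ b₂ b₃ G μ v w) (G u) with ⟨heq, _⟩ | ⟨heq, hlt⟩
      · rw [heq] at hmin; exact hmin
      · rw [heq] at hmin; exact absurd hmin (not_le.2 hTuGu)
    · exact hTuGu
  by_cases hv0VR : v0 ∈ VR b₁ b₂ b₃ G μ 0 w
  · exact (step1 v0 hv0VR hgt).1
  -- v0 ∉ VR : approximate from above
  have hv0nonneg : 0 ≤ v0 := vstar_nonneg hb₁ w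
  have hv0ltb₁ : v0 < b₁ := lt_of_lt_of_le hgt hvb
  set δ : ℕ → ℝ := fun n => min (1 / ((n : ℝ) + 1)) (v - v0) with hδ
  have hδpos : ∀ n, 0 < δ n := by
    intro n
    refine lt_min (by positivity) (by linarith)
  have hex : ∀ n : ℕ, ∃ u, u ∈ VR b₁ b₂ b₃ G μ 0 w ∧ u < v0 + δ n := by
    intro n
    have : sInf (VR b₁ b₂ b₃ G μ 0 w) < v0 + δ n := by
      rw [← hv0inf]; linarith [hδpos n]
    obtain ⟨u, hu1, hu2⟩ := (csInf_lt_iff hbdd hne).1 this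
    exact ⟨u, hu1, hu2⟩
  choose u huVR hult using hex
  have huge : ∀ n, v0 ≤ u n := by
    intro n
    rw [hv0inf]
    exact csInf_le hbdd (huVR n)
  have hunelt : ∀ n, v0 < u n := by
    intro n
    rcases eq_or_lt_of_le (huge n) with heq | hlt
    · exact absurd (heq ▸ huVR n) hv0VR
    · exact hlt
  have huv : ∀ n, u n < v := by
    intro n
    calc u n < v0 + δ n := hult n
      _ ≤ v0 + (v - v0) := by linarith [min_le_right (1 / ((n : ℝ) + 1)) (v - v0)]
      _ = v := by ring
  have hutend : Tendsto u atTop (𝓝 v0) := by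
    have hub : ∀ n, u n ≤ v0 + 1 / ((n : ℝ) + 1) := by
      intro n
      have := (hult n).le
      have h2 := min_le_left (1 / ((n : ℝ) + 1)) (v - v0)
      simp only [hδ] at this
      linarith
    have htop : Tendsto (fun n : ℕ => v0 + 1 / ((n : ℝ) + 1)) atTop (𝓝 (v0 + 0)) := by
      refine Tendsto.add tendsto_const_nhds ?_
      exact Filter.Tendsto.div_atTop tendsto_const_nhds
        (tendsto_atTop_add_const_right atTop 1 tendsto_natCast_atTop_atTop)
    rw [add_zero] at htop
    exact tendsto_of_tendsto_of_tendsto_of_le_of_le tendsto_const_nhds htop huge hub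
  have hGutend : Tendsto (fun n => G (u n)) atTop (𝓝 (G v0)) :=
    seq_tendsto_of_continuousOn hGc1 ⟨hv0nonneg, hv0ltb₁⟩
      (fun n => ⟨(huVR n).1.1.le, (huVR n).1.2⟩) hutend
  have hTvGv0 : condT b₁ b₂ b₃ G μ v w ≤ G v0 := by
    refine ge_of_tendsto hGutend (Filter.Eventually.of_forall (fun n => ?_))
    have := step1 (u n) (huVR n) (huv n)
    linarith [this.1, this.2]
  rcases eq_or_lt_of_le hv0nonneg with h0 | hpos
  swap
  · -- v0 > 0
    have hv0Ioo : v0 ∈ Ioo 0 b₁ := ⟨hpos, hv0ltb₁⟩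
    have : G v0 ≤ condT b₁ b₂ b₃ G μ v0 w := by
      by_contra h
      push_neg at h
      exact hv0VR ⟨hv0Ioo, by rw [leftLim_eq_G hGc1 hv0Ioo, sub_zero]; linarith⟩
    linarith [hTvGv0, this]
  -- v0 = 0 : the atom-at-0 case
  have h0' : v0 = 0 := h0.symm
  set P : Set ℝ := {y : ℝ | 0 < y ∧ (y : EReal) ≤ w} ∩ (ITset b₁ b₂ b₃ ∪ {0})
    with hPdef
  have hPmeas : MeasurableSet P := by
    refine MeasurableSet.inter ?_ (ITset_measurable.union (measurableSet_singleton 0))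
    have : {y : ℝ | 0 < y ∧ (y : EReal) ≤ w}
        = Ioi 0 ∩ ((fun y : ℝ => (y : EReal)) ⁻¹' Iic w) := rfl
    rw [this]
    exact measurableSet_Ioi.inter (measurable_coe_real_ereal measurableSet_Iic)
  have hPpos : 0 < μ P := by
    refine lt_of_lt_of_le (hfull b₁ b₂ hb₁₂ ?_) (measure_mono ?_)
    · intro y hy; exact Or.inl (Or.inr ⟨hy.1.le, hy.2.le⟩)
    · intro y hy
      refine ⟨⟨lt_of_le_of_lt hb₁ hy.1, le_trans ?_ hw⟩,
        Or.inl (Or.inl (Or.inr ⟨hy.1.le, hy.2.le⟩))⟩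
      exact_mod_cast hy.2.le
  set TP := (∫ y in P, G y ∂μ) / (μ P).toReal with hTP
  -- T (u n) w tends to TP
  have hpt : ∀ x : ℝ, ∀ᶠ n in atTop,
      (x ∈ condSet b₁ b₂ b₃ (u n) w ↔ x ∈ P) := by
    intro x
    rcases le_or_gt x 0 with hx | hx
    · filter_upwards with n
      constructor
      · intro h
        exact absurd (lt_of_lt_of_le (h0 ▸ hunelt n) h.1.1) (not_lt.2 hx)
      · intro h
        exact absurd h.1.1 (not_lt.2 hx)
    · filter_upwards [hutend.eventually (h0' ▸ eventually_lt_nhds hx)] with n hn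
      constructor
      · exact fun h => ⟨⟨hx, h.1.2⟩, h.2⟩
      · exact fun h => ⟨⟨hn.le, h.1.2⟩, h.2⟩
  have httP : Tendsto (fun n => condT b₁ b₂ b₃ G μ (u n) w) atTop (𝓝 TP) := by
    have hnum := tendsto_setIntegral_of_eventually (μ := μ) G hGint
      (fun n => condSet b₁ b₂ b₃ (u n) w) P
      (fun n => condSet_measurable _ _) hPmeas hpt
    have hden := tendsto_measure_toReal_of_eventually (μ := μ)
      (fun n => condSet b₁ b₂ b₃ (u n) w) P
      (fun n => condSet_measurable _ _) hPmeas hpt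
    have hppos : (0 : ℝ) < (μ P).toReal :=
      ENNReal.toReal_pos hPpos.ne' (measure_ne_top μ _)
    exact hnum.div hden hppos.ne'
  have hTvTP : condT b₁ b₂ b₃ G μ v w ≤ TP :=
    ge_of_tendsto httP (Filter.Eventually.of_forall
      (fun n => (step1 (u n) (huVR n) (huv n)).1))
  have hTPG0 : TP ≤ G 0 := by
    refine le_of_tendsto_of_tendsto' (g := fun n => G (u n)) httP ?_ ?_
    · have : G v0 = G 0 := by rw [h0']
      exact this ▸ hGutend
    · exact fun n => (step1 (u n) (huVR n) (huv n)).2.le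
  -- T(0, w) ≥ min(TP, G 0) = TP
  have hsub : P ⊆ condSet b₁ b₂ b₃ 0 w := fun y hy => ⟨⟨hy.1.1.le, hy.1.2⟩, hy.2⟩
  have hfinal : min TP (G 0) ≤ condT b₁ b₂ b₃ G μ 0 w := by
    unfold condT
    refine min_le_mean hPmeas (condSet_measurable 0 w) hsub hPpos
      (measure_ne_top μ _) hGint ?_
    intro x hx
    have hx0 : x = 0 := by
      by_contra hne0
      have hxpos : 0 < x := lt_of_le_of_ne hx.1.1.1 (Ne.symm hne0)
      exact hx.2 ⟨⟨hxpos, hx.1.1.2⟩, hx.1.2⟩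
    rw [hx0]
  rw [min_eq_left hTPG0] at hfinal
  rw [h0']
  linarith [hTvTP, hfinal]

end ClaimA2
section Wside

variable {b₁ b₂ : ℝ} {b₃ : EReal} {G : ℝ → ℝ} {μ : Measure ℝ}

lemma seq_down {y l : ℝ} (h : l < y) :
    (∀ n : ℕ, l < y - (y - l) / ((n : ℝ) + 2) ∧ y - (y - l) / ((n : ℝ) + 2) < y) ∧
    Tendsto (fun n : ℕ => y - (y - l) / ((n : ℝ) + 2)) atTop (𝓝 y) := by
  constructor
  · intro n
    have h1 : 0 < (y - l) / ((n : ℝ) + 2) := by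
      have : (0:ℝ) < y - l := by linarith
      positivity
    have h2 : (y - l) / ((n : ℝ) + 2) < y - l := by
      rw [div_lt_iff₀ (by positivity)]
      nlinarith
    exact ⟨by linarith, by linarith⟩
  · have h0 : Tendsto (fun n : ℕ => (y - l) / ((n : ℝ) + 2)) atTop (𝓝 0) :=
      Filter.Tendsto.div_atTop tendsto_const_nhds
        (tendsto_atTop_add_const_right atTop 2 tendsto_natCast_atTop_atTop)
    have h1 : Tendsto (fun n : ℕ => y - (y - l) / ((n : ℝ) + 2)) atTop (𝓝 (y - 0)) :=
      Tendsto.sub tendsto_const_nhds h0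
    simpa using h1

lemma seq_up {a r : ℝ} (h : a < r) :
    (∀ n : ℕ, a < a + (r - a) / ((n : ℝ) + 2) ∧ a + (r - a) / ((n : ℝ) + 2) < r) ∧
    Tendsto (fun n : ℕ => a + (r - a) / ((n : ℝ) + 2)) atTop (𝓝 a) := by
  constructor
  · intro n
    have h1 : 0 < (r - a) / ((n : ℝ) + 2) := by
      have : (0:ℝ) < r - a := by linarith
      positivity
    have h2 : (r - a) / ((n : ℝ) + 2) < r - a := by
      rw [div_lt_iff₀ (by positivity)]
      nlinarith
    exact ⟨by linarith, by linarith⟩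
  · have h0 : Tendsto (fun n : ℕ => (r - a) / ((n : ℝ) + 2)) atTop (𝓝 0) :=
      Filter.Tendsto.div_atTop tendsto_const_nhds
        (tendsto_atTop_add_const_right atTop 2 tendsto_natCast_atTop_atTop)
    have h1 : Tendsto (fun n : ℕ => a + (r - a) / ((n : ℝ) + 2)) atTop (𝓝 (a + 0)) :=
      Tendsto.add tendsto_const_nhds h0
    simpa using h1

/-- Limit of `G` from the left inside `I₃`. -/
lemma G_le_of_forall_lt (hGc3 : ContinuousOn G {y : ℝ | b₂ < y ∧ (y : EReal) < b₃})
    {y : ℝ} (hy : b₂ < y ∧ (y : EReal) < b₃) {l : ℝ} (hl : b₂ ≤ l) (hly : l < y)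
    {c : ℝ} (h : ∀ z : ℝ, l < z → z < y → G z ≤ c) : G y ≤ c := by
  obtain ⟨hb, ht⟩ := seq_down hly
  set z : ℕ → ℝ := fun n => y - (y - l) / ((n : ℝ) + 2) with hz
  have hzI : ∀ n, z n ∈ {y : ℝ | b₂ < y ∧ (y : EReal) < b₃} := by
    intro n
    refine ⟨lt_of_le_of_lt hl (hb n).1, ?_⟩
    calc ((z n : ℝ) : EReal) < (y : EReal) := EReal.coe_lt_coe_iff.2 (hb n).2
      _ < b₃ := hy.2
  have := seq_tendsto_of_continuousOn hGc3 hy hzI ht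
  exact le_of_tendsto this (Filter.Eventually.of_forall
    (fun n => h (z n) (hb n).1 (hb n).2))

/-- `T(v, ·)` is continuous from the right along sequences of real endpoints. -/
lemma tendsto_condT_right (hb₁₂ : b₁ < b₂) (hμ : IsProbabilityMeasure μ)
    (hfull : ∀ a b : ℝ, a < b → Ioo a b ⊆ ITset b₁ b₂ b₃ → 0 < μ (Ioo a b))
    (hGint : Integrable G μ) {v : ℝ} (hv : v ≤ b₁) {a : ℝ} (ha : b₂ ≤ a)
    {x : ℕ → ℝ} (hxa : ∀ n, a ≤ x n) (hx : Tendsto x atTop (𝓝 a)) :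
    Tendsto (fun n => condT b₁ b₂ b₃ G μ v ((x n : ℝ) : EReal)) atTop
      (𝓝 (condT b₁ b₂ b₃ G μ v ((a : ℝ) : EReal))) := by
  refine tendsto_condT hb₁₂ hμ hfull hGint hv (by exact_mod_cast ha) ?_
  intro t
  rcases le_or_gt t a with hta | hta
  · filter_upwards with n
    constructor
    · intro h
      exact ⟨⟨h.1.1, by exact_mod_cast hta⟩, h.2⟩
    · intro h
      refine ⟨⟨h.1.1, ?_⟩, h.2⟩
      have : t ≤ x n := hta.trans (hxa n)
      exact_mod_cast this
  · filter_upwards [hx.eventually (eventually_lt_nhds hta)] with n hn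
    constructor
    · intro h
      have : (t : EReal) ≤ (x n : EReal) := h.1.2
      have h2 : t ≤ x n := by exact_mod_cast this
      exact absurd h2 (not_le.2 hn)
    · intro h
      have : (t : EReal) ≤ (a : EReal) := h.1.2
      have h2 : t ≤ a := by exact_mod_cast this
      exact absurd h2 (not_le.2 hta)

lemma notin_WL_ge (hGc3 : ContinuousOn G {y : ℝ | b₂ < y ∧ (y : EReal) < b₃})
    {ε' : ℝ} {w : ℝ} (hw : b₂ < w ∧ (w : EReal) < b₃)
    (h : w ∉ WL b₁ b₂ b₃ G μ ε') :
    condT b₁ b₂ b₃ G μ (vstar b₁ b₂ b₃ G μ w) w ≤ G w + ε' := by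
  by_contra hc
  push_neg at hc
  exact h ⟨hw, by rw [rightLim_eq_G hGc3 hw]; linarith⟩

lemma mem_WL_gt (hGc3 : ContinuousOn G {y : ℝ | b₂ < y ∧ (y : EReal) < b₃})
    {ε' : ℝ} {w : ℝ} (h : w ∈ WL b₁ b₂ b₃ G μ ε') :
    G w + ε' < condT b₁ b₂ b₃ G μ (vstar b₁ b₂ b₃ G μ w) w := by
  have := h.2
  rwa [rightLim_eq_G hGc3 h.1] at this

/-- the `★` lemma: `M` is nonincreasing up to points of `W_{L,0}`. -/
lemma M_anti (hb₁ : 0 ≤ b₁) (hb₁₂ : b₁ < b₂) (hμ : IsProbabilityMeasure μ)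
    (hfull : ∀ a b : ℝ, a < b → Ioo a b ⊆ ITset b₁ b₂ b₃ → 0 < μ (Ioo a b))
    (hGint : Integrable G μ) (hG1 : MonotoneOn G (Ioo 0 b₁))
    (hG3 : MonotoneOn G {y : ℝ | b₂ < y ∧ (y : EReal) < b₃})
    (hGc1 : ContinuousOn G (Ico 0 b₁))
    (hGc3 : ContinuousOn G {y : ℝ | b₂ < y ∧ (y : EReal) < b₃})
    {w' : ℝ} (hw' : w' ∈ WL b₁ b₂ b₃ G μ 0) {w : ℝ} (hw : b₂ ≤ w) (hww' : w < w') :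
    condT b₁ b₂ b₃ G μ (vstar b₁ b₂ b₃ G μ w') w'
      ≤ condT b₁ b₂ b₃ G μ (vstar b₁ b₂ b₃ G μ w) w := by
  have hGw' : G w' + 0 < condT b₁ b₂ b₃ G μ (vstar b₁ b₂ b₃ G μ w') w' :=
    mem_WL_gt hGc3 hw'
  have happ : condT b₁ b₂ b₃ G μ (vstar b₁ b₂ b₃ G μ w') w'
      ≤ max (condT b₁ b₂ b₃ G μ (vstar b₁ b₂ b₃ G μ w') w) (G w') := by
    refine condT_le_max_right hb₁ hb₁₂ hμ hfull hGint (vstar_le hb₁ _)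
      (by exact_mod_cast hw) (by exact_mod_cast hww'.le) ?_
    intro y hy h1 h2
    exact hG3 hy hw'.1 (by exact_mod_cast h2)
  have hA : condT b₁ b₂ b₃ G μ (vstar b₁ b₂ b₃ G μ w') w
      ≤ condT b₁ b₂ b₃ G μ (vstar b₁ b₂ b₃ G μ w) w :=
    claimA hb₁ hb₁₂ hμ hfull hGint hG1 hGc1 (by exact_mod_cast hw)
      (vstar_nonneg hb₁ _) (vstar_le hb₁ _)
  rcases max_cases (condT b₁ b₂ b₃ G μ (vstar b₁ b₂ b₃ G μ w') w) (G w') with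
    ⟨heq, _⟩ | ⟨heq, _⟩
  · rw [heq] at happ; exact happ.trans hA
  · rw [heq] at happ; linarith

/-- `W_{L,ε}` is down-closed in `I₃`. -/
lemma WL_downward (hb₁ : 0 ≤ b₁) (hb₁₂ : b₁ < b₂) (hμ : IsProbabilityMeasure μ)
    (hfull : ∀ a b : ℝ, a < b → Ioo a b ⊆ ITset b₁ b₂ b₃ → 0 < μ (Ioo a b))
    (hGint : Integrable G μ) (hG1 : MonotoneOn G (Ioo 0 b₁))
    (hG3 : MonotoneOn G {y : ℝ | b₂ < y ∧ (y : EReal) < b₃})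
    (hGc1 : ContinuousOn G (Ico 0 b₁))
    (hGc3 : ContinuousOn G {y : ℝ | b₂ < y ∧ (y : EReal) < b₃})
    {ε' : ℝ} {w' : ℝ} (hw' : w' ∈ WL b₁ b₂ b₃ G μ ε') (hε' : 0 ≤ ε')
    {w : ℝ} (hw : b₂ < w ∧ (w : EReal) < b₃) (hww' : w < w') :
    w ∈ WL b₁ b₂ b₃ G μ ε' := by
  have hw'0 : w' ∈ WL b₁ b₂ b₃ G μ 0 := by
    refine ⟨hw'.1, ?_⟩
    have := hw'.2
    linarith
  have h1 := M_anti hb₁ hb₁₂ hμ hfull hGint hG1 hG3 hGc1 hGc3 hw'0 hw.1.le hww'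
  have h2 := mem_WL_gt hGc3 hw'
  have h3 : G w ≤ G w' := hG3 hw hw'.1 hww'.le
  exact ⟨hw, by rw [rightLim_eq_G hGc3 hw]; linarith⟩

/-- `F3`: `M(w̄) ≥ G(w'')` for `w'' ∈ W_{L,0}` and `w'' ≤ w̄`. -/
lemma M_ge_G (hb₁ : 0 ≤ b₁) (hb₁₂ : b₁ < b₂) (hμ : IsProbabilityMeasure μ)
    (hfull : ∀ a b : ℝ, a < b → Ioo a b ⊆ ITset b₁ b₂ b₃ → 0 < μ (Ioo a b))
    (hGint : Integrable G μ) (hG1 : MonotoneOn G (Ioo 0 b₁))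
    (hG3 : MonotoneOn G {y : ℝ | b₂ < y ∧ (y : EReal) < b₃})
    (hGc1 : ContinuousOn G (Ico 0 b₁))
    (hGc3 : ContinuousOn G {y : ℝ | b₂ < y ∧ (y : EReal) < b₃})
    {w'' : ℝ} (hw'' : w'' ∈ WL b₁ b₂ b₃ G μ 0) {wb : EReal}
    (hwb : ((w'' : ℝ) : EReal) ≤ wb) :
    G w'' ≤ condT b₁ b₂ b₃ G μ (vstar b₁ b₂ b₃ G μ wb) wb := by
  have hb₂w'' : (b₂ : EReal) ≤ (w'' : EReal) := by exact_mod_cast hw''.1.1.le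
  have hmin : min (condT b₁ b₂ b₃ G μ (vstar b₁ b₂ b₃ G μ w'') w'') (G w'')
      ≤ condT b₁ b₂ b₃ G μ (vstar b₁ b₂ b₃ G μ w'') wb := by
    refine min_le_condT_right hb₁ hb₁₂ hμ hfull hGint (vstar_le hb₁ _)
      hb₂w'' hwb ?_
    intro y hy h1 _
    exact hG3 hw''.1 hy (by exact_mod_cast h1.le)
  have hA : condT b₁ b₂ b₃ G μ (vstar b₁ b₂ b₃ G μ w'') wb
      ≤ condT b₁ b₂ b₃ G μ (vstar b₁ b₂ b₃ G μ wb) wb :=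
    claimA hb₁ hb₁₂ hμ hfull hGint hG1 hGc1 (le_trans hb₂w'' hwb)
      (vstar_nonneg hb₁ _) (vstar_le hb₁ _)
  have h2 := mem_WL_gt hGc3 hw''
  rcases min_cases (condT b₁ b₂ b₃ G μ (vstar b₁ b₂ b₃ G μ w'') w'') (G w'') with
    ⟨heq, hle⟩ | ⟨heq, _⟩
  · linarith [hmin.trans hA, heq ▸ hmin]
  · rw [heq] at hmin
    linarith [hmin.trans hA]

end Wside
section WstarLemmas

variable {b₁ b₂ : ℝ} {b₃ : EReal} {G : ℝ → ℝ} {μ : Measure ℝ}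

lemma wstarL_ge_b₂ (ε' : ℝ) : (b₂ : EReal) ≤ wstarL b₁ b₂ b₃ G μ ε' := by
  unfold wstarL
  split_ifs with h
  · obtain ⟨x, hx⟩ := h
    exact le_trans (EReal.coe_le_coe_iff.2 hx.1.1.le) (le_sSup ⟨x, hx, rfl⟩)
  · exact le_refl _

lemma wstarL_le_b₃ (hb₂₃ : (b₂ : EReal) < b₃) (ε' : ℝ) :
    wstarL b₁ b₂ b₃ G μ ε' ≤ b₃ := by
  unfold wstarL
  split_ifs with h
  · refine sSup_le ?_
    rintro x ⟨y, hy, rfl⟩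
    exact hy.1.2.le
  · exact hb₂₃.le

lemma wstarR_le_b₃ (hb₂₃ : (b₂ : EReal) < b₃) (ε' : ℝ) :
    wstarR b₁ b₂ b₃ G μ ε' ≤ b₃ := by
  unfold wstarR
  split_ifs with h
  · obtain ⟨x, hx⟩ := h
    have h1 : sInf (WR b₁ b₂ b₃ G μ ε') ≤ x :=
      csInf_le ⟨b₂, fun r hr => hr.1.1.le⟩ hx
    exact le_trans (EReal.coe_le_coe_iff.2 h1) hx.1.2.le
  · exact le_refl _

lemma WL_subset_zero {ε' : ℝ} (hε' : 0 ≤ ε') :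
    WL b₁ b₂ b₃ G μ ε' ⊆ WL b₁ b₂ b₃ G μ 0 := by
  intro w hw
  exact ⟨hw.1, by linarith [hw.2]⟩

lemma wstarL_le_wstar {ε' : ℝ} (hε' : 0 ≤ ε') :
    wstarL b₁ b₂ b₃ G μ ε' ≤ wstarL b₁ b₂ b₃ G μ 0 := by
  unfold wstarL
  split_ifs with h1 h2 h2
  · exact sSup_le_sSup (Set.image_mono (WL_subset_zero hε'))
  · exact absurd (h1.mono (WL_subset_zero hε')) h2
  · obtain ⟨x, hx⟩ := h2
    exact le_trans (EReal.coe_le_coe_iff.2 hx.1.1.le) (le_sSup ⟨x, hx, rfl⟩)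
  · exact le_refl _

lemma le_wstarL {ε' : ℝ} {z : ℝ} (hz : z ∈ WL b₁ b₂ b₃ G μ ε') :
    ((z : ℝ) : EReal) ≤ wstarL b₁ b₂ b₃ G μ ε' := by
  unfold wstarL
  rw [if_pos ⟨z, hz⟩]
  exact le_sSup ⟨z, hz, rfl⟩

lemma notin_WL_of_gt_wstarL {ε' : ℝ} {z : ℝ}
    (hgt : wstarL b₁ b₂ b₃ G μ ε' < ((z : ℝ) : EReal)) :
    z ∉ WL b₁ b₂ b₃ G μ ε' :=
  fun hz => absurd (le_wstarL hz) (not_le.2 hgt)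

lemma mem_WL_of_lt_wstarL (hb₁ : 0 ≤ b₁) (hb₁₂ : b₁ < b₂)
    (hμ : IsProbabilityMeasure μ)
    (hfull : ∀ a b : ℝ, a < b → Ioo a b ⊆ ITset b₁ b₂ b₃ → 0 < μ (Ioo a b))
    (hGint : Integrable G μ) (hG1 : MonotoneOn G (Ioo 0 b₁))
    (hG3 : MonotoneOn G {y : ℝ | b₂ < y ∧ (y : EReal) < b₃})
    (hGc1 : ContinuousOn G (Ico 0 b₁))
    (hGc3 : ContinuousOn G {y : ℝ | b₂ < y ∧ (y : EReal) < b₃})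
    {ε' : ℝ} (hε' : 0 ≤ ε') {z : ℝ} (hz : b₂ < z ∧ (z : EReal) < b₃)
    (hlt : ((z : ℝ) : EReal) < wstarL b₁ b₂ b₃ G μ ε') :
    z ∈ WL b₁ b₂ b₃ G μ ε' := by
  unfold wstarL at hlt
  by_cases h : (WL b₁ b₂ b₃ G μ ε').Nonempty
  · rw [if_pos h] at hlt
    obtain ⟨x, ⟨y, hy, rfl⟩, hzx⟩ := lt_sSup_iff.1 hlt
    exact WL_downward hb₁ hb₁₂ hμ hfull hGint hG1 hG3 hGc1 hGc3 hy hε' hz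
      (EReal.coe_lt_coe_iff.1 hzx)
  · rw [if_neg h] at hlt
    exact absurd (EReal.coe_lt_coe_iff.1 hlt) (not_lt.2 hz.1.le)

lemma ereal_real_of_lt_top {x : EReal} (h1 : (b₂ : EReal) ≤ x) (h2 : x < ⊤) :
    ∃ r : ℝ, x = (r : EReal) ∧ b₂ ≤ r := by
  have hneTop : x ≠ ⊤ := h2.ne
  have hneBot : x ≠ ⊥ := fun h => by
    rw [h] at h1
    exact absurd h1 (not_le.2 (EReal.bot_lt_coe b₂))
  refine ⟨x.toReal, (EReal.coe_toReal hneTop hneBot).symm, ?_⟩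
  have := (EReal.coe_toReal hneTop hneBot) ▸ h1
  exact_mod_cast this

end WstarLemmas
section PartL

variable {b₁ b₂ : ℝ} {b₃ : EReal} {G : ℝ → ℝ} {μ : Measure ℝ}

lemma partL (hb₁ : 0 ≤ b₁) (hb₁₂ : b₁ < b₂) (hb₂₃ : (b₂ : EReal) < b₃)
    (hμ : IsProbabilityMeasure μ)
    (hfull : ∀ a b : ℝ, a < b → Ioo a b ⊆ ITset b₁ b₂ b₃ → 0 < μ (Ioo a b))
    (hGint : Integrable G μ) (hG1 : MonotoneOn G (Ioo 0 b₁))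
    (hG3 : MonotoneOn G {y : ℝ | b₂ < y ∧ (y : EReal) < b₃})
    (hGc1 : ContinuousOn G (Ico 0 b₁))
    (hGc3 : ContinuousOn G {y : ℝ | b₂ < y ∧ (y : EReal) < b₃})
    {ε : ℝ} (hε : 0 < ε) :
    |condT b₁ b₂ b₃ G μ (vstar b₁ b₂ b₃ G μ (wstarL b₁ b₂ b₃ G μ ε))
        (wstarL b₁ b₂ b₃ G μ ε)
      - condT b₁ b₂ b₃ G μ (vstar b₁ b₂ b₃ G μ (wstarL b₁ b₂ b₃ G μ 0))
        (wstarL b₁ b₂ b₃ G μ 0)| ≤ ε := by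
  have hle : wstarL b₁ b₂ b₃ G μ ε ≤ wstarL b₁ b₂ b₃ G μ 0 := wstarL_le_wstar hε.le
  rcases eq_or_lt_of_le hle with heq | hlt
  · rw [heq, sub_self, abs_zero]
    exact hε.le
  -- wε is a real number
  obtain ⟨wer, hwer, hwerb₂⟩ :=
    ereal_real_of_lt_top (wstarL_ge_b₂ (G := G) (μ := μ) ε) (lt_of_lt_of_le hlt le_top)
  rw [hwer] at hlt ⊢
  set ws := wstarL b₁ b₂ b₃ G μ 0 with hws
  have hwsb₂ : (b₂ : EReal) ≤ ws := wstarL_ge_b₂ 0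
  have hwsb₃ : ws ≤ b₃ := wstarL_le_b₃ hb₂₃ 0
  -- inner bound: G below M(wer) strictly below ws
  have hinner : ∀ z : ℝ, (b₂ < z ∧ (z : EReal) < b₃) → wer < z →
      ((z : ℝ) : EReal) < ws →
      G z ≤ condT b₁ b₂ b₃ G μ (vstar b₁ b₂ b₃ G μ ((wer : ℝ) : EReal))
        ((wer : ℝ) : EReal) := by
    intro z hzI hz1 hz2
    have hzW0 : z ∈ WL b₁ b₂ b₃ G μ 0 :=
      mem_WL_of_lt_wstarL hb₁ hb₁₂ hμ hfull hGint hG1 hG3 hGc1 hGc3 (le_refl 0)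
        hzI hz2
    have h3 := mem_WL_gt hGc3 hzW0
    have h4 := M_anti hb₁ hb₁₂ hμ hfull hGint hG1 hG3 hGc1 hGc3 hzW0 hwerb₂ hz1
    linarith
  -- L-lower : M(ws) ≤ M(wer)
  have hlower : condT b₁ b₂ b₃ G μ (vstar b₁ b₂ b₃ G μ ws) ws
      ≤ condT b₁ b₂ b₃ G μ (vstar b₁ b₂ b₃ G μ ((wer : ℝ) : EReal))
        ((wer : ℝ) : EReal) := by
    have happ : condT b₁ b₂ b₃ G μ (vstar b₁ b₂ b₃ G μ ws) ws
        ≤ max (condT b₁ b₂ b₃ G μ (vstar b₁ b₂ b₃ G μ ws) ((wer : ℝ) : EReal))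
          (condT b₁ b₂ b₃ G μ (vstar b₁ b₂ b₃ G μ ((wer : ℝ) : EReal))
            ((wer : ℝ) : EReal)) := by
      refine condT_le_max_right hb₁ hb₁₂ hμ hfull hGint (vstar_le hb₁ _)
        (by exact_mod_cast hwerb₂) hlt.le ?_
      intro y hy h1 h2
      rcases eq_or_lt_of_le h2 with heq2 | hlt2
      · refine G_le_of_forall_lt hGc3 hy hwerb₂ (by exact_mod_cast h1) ?_
        intro z hz1 hz2
        have hzI : b₂ < z ∧ (z : EReal) < b₃ :=
          ⟨lt_of_le_of_lt hwerb₂ hz1, lt_trans (EReal.coe_lt_coe_iff.2 hz2) hy.2⟩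
        exact hinner z hzI hz1 (lt_of_lt_of_le (EReal.coe_lt_coe_iff.2 hz2) heq2.le)
      · exact hinner y hy (by exact_mod_cast h1) hlt2
    have hA : condT b₁ b₂ b₃ G μ (vstar b₁ b₂ b₃ G μ ws) ((wer : ℝ) : EReal)
        ≤ condT b₁ b₂ b₃ G μ (vstar b₁ b₂ b₃ G μ ((wer : ℝ) : EReal))
          ((wer : ℝ) : EReal) :=
      claimA hb₁ hb₁₂ hμ hfull hGint hG1 hGc1 (by exact_mod_cast hwerb₂)
        (vstar_nonneg hb₁ _) (vstar_le hb₁ _)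
    exact happ.trans (max_le hA (le_refl _))
  -- L-upper : M(wer) ≤ M(ws) + ε
  have hupper : condT b₁ b₂ b₃ G μ (vstar b₁ b₂ b₃ G μ ((wer : ℝ) : EReal))
      ((wer : ℝ) : EReal)
      ≤ condT b₁ b₂ b₃ G μ (vstar b₁ b₂ b₃ G μ ws) ws + ε := by
    obtain ⟨r, hr1, hr2⟩ := EReal.lt_iff_exists_real_btwn.1 hlt
    have hwr : wer < r := EReal.coe_lt_coe_iff.1 hr1
    obtain ⟨hwn, hwnt⟩ := seq_up hwr
    set wn : ℕ → ℝ := fun n => wer + (r - wer) / ((n : ℝ) + 2) with hwndef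
    have hwnI : ∀ n, b₂ < wn n ∧ ((wn n : ℝ) : EReal) < b₃ := by
      intro n
      refine ⟨lt_of_le_of_lt hwerb₂ (hwn n).1, ?_⟩
      calc ((wn n : ℝ) : EReal) < (r : EReal) := EReal.coe_lt_coe_iff.2 (hwn n).2
        _ < ws := hr2
        _ ≤ b₃ := hwsb₃
    have hwnlt : ∀ n, ((wn n : ℝ) : EReal) < ws := by
      intro n
      calc ((wn n : ℝ) : EReal) < (r : EReal) := EReal.coe_lt_coe_iff.2 (hwn n).2
        _ < ws := hr2
    have hwnW0 : ∀ n, wn n ∈ WL b₁ b₂ b₃ G μ 0 := fun n =>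
      mem_WL_of_lt_wstarL hb₁ hb₁₂ hμ hfull hGint hG1 hG3 hGc1 hGc3 (le_refl 0)
        (hwnI n) (hwnlt n)
    have hwnnot : ∀ n, wn n ∉ WL b₁ b₂ b₃ G μ ε := fun n =>
      notin_WL_of_gt_wstarL (by rw [hwer]; exact EReal.coe_lt_coe_iff.2 (hwn n).1)
    have hMwn : ∀ n, condT b₁ b₂ b₃ G μ (vstar b₁ b₂ b₃ G μ (wn n)) (wn n)
        ≤ G (wn n) + ε := fun n => notin_WL_ge hGc3 (hwnI n) (hwnnot n)
    have hGwn : ∀ n, G (wn n) ≤ condT b₁ b₂ b₃ G μ (vstar b₁ b₂ b₃ G μ ws) ws :=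
      fun n => M_ge_G hb₁ hb₁₂ hμ hfull hGint hG1 hG3 hGc1 hGc3 (hwnW0 n)
        (hwnlt n).le
    have hcl : ∀ n, condT b₁ b₂ b₃ G μ (vstar b₁ b₂ b₃ G μ ((wer : ℝ) : EReal))
        ((wn n : ℝ) : EReal)
        ≤ condT b₁ b₂ b₃ G μ (vstar b₁ b₂ b₃ G μ ((wn n : ℝ) : EReal))
          ((wn n : ℝ) : EReal) := fun n =>
      claimA hb₁ hb₁₂ hμ hfull hGint hG1 hGc1
        (by exact_mod_cast (hwnI n).1.le) (vstar_nonneg hb₁ _) (vstar_le hb₁ _)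
    have htt : Tendsto (fun n => condT b₁ b₂ b₃ G μ
        (vstar b₁ b₂ b₃ G μ ((wer : ℝ) : EReal)) ((wn n : ℝ) : EReal)) atTop
        (𝓝 (condT b₁ b₂ b₃ G μ (vstar b₁ b₂ b₃ G μ ((wer : ℝ) : EReal))
          ((wer : ℝ) : EReal))) :=
      tendsto_condT_right hb₁₂ hμ hfull hGint (vstar_le hb₁ _) hwerb₂
        (fun n => (hwn n).1.le) hwnt
    refine le_of_tendsto htt (Filter.Eventually.of_forall (fun n => ?_))
    calc condT b₁ b₂ b₃ G μ (vstar b₁ b₂ b₃ G μ ((wer : ℝ) : EReal))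
          ((wn n : ℝ) : EReal)
        ≤ condT b₁ b₂ b₃ G μ (vstar b₁ b₂ b₃ G μ ((wn n : ℝ) : EReal))
          ((wn n : ℝ) : EReal) := hcl n
      _ ≤ G (wn n) + ε := hMwn n
      _ ≤ condT b₁ b₂ b₃ G μ (vstar b₁ b₂ b₃ G μ ws) ws + ε := by
          linarith [hGwn n]
  rw [abs_le]
  constructor <;> linarith

end PartL
section PartR

variable {b₁ b₂ : ℝ} {b₃ : EReal} {G : ℝ → ℝ} {μ : Measure ℝ}

lemma partR (hb₁ : 0 ≤ b₁) (hb₁₂ : b₁ < b₂) (hb₂₃ : (b₂ : EReal) < b₃)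
    (hμ : IsProbabilityMeasure μ)
    (hfull : ∀ a b : ℝ, a < b → Ioo a b ⊆ ITset b₁ b₂ b₃ → 0 < μ (Ioo a b))
    (hGint : Integrable G μ) (hG1 : MonotoneOn G (Ioo 0 b₁))
    (hG3 : MonotoneOn G {y : ℝ | b₂ < y ∧ (y : EReal) < b₃})
    (hGc1 : ContinuousOn G (Ico 0 b₁))
    (hGc3 : ContinuousOn G {y : ℝ | b₂ < y ∧ (y : EReal) < b₃})
    {ε : ℝ} (hε : 0 < ε) :
    |condT b₁ b₂ b₃ G μ (vstar b₁ b₂ b₃ G μ (wstarR b₁ b₂ b₃ G μ ε))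
        (wstarR b₁ b₂ b₃ G μ ε)
      - condT b₁ b₂ b₃ G μ (vstar b₁ b₂ b₃ G μ (wstarL b₁ b₂ b₃ G μ 0))
        (wstarL b₁ b₂ b₃ G μ 0)| ≤ ε := by
  have hTdef : condT b₁ b₂ b₃ G μ (vstarstar b₁ b₂ b₃ G μ) (wstar b₁ b₂ b₃ G μ)
      = condT b₁ b₂ b₃ G μ (vstar b₁ b₂ b₃ G μ (wstarL b₁ b₂ b₃ G μ 0))
        (wstarL b₁ b₂ b₃ G μ 0) := rfl
  have hwsb₂ : (b₂ : EReal) ≤ wstarL b₁ b₂ b₃ G μ 0 := wstarL_ge_b₂ 0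
  have hbddWR : BddBelow (WR b₁ b₂ b₃ G μ ε) := ⟨b₂, fun r hr => hr.1.1.le⟩
  have hR1 : wstarL b₁ b₂ b₃ G μ 0 ≤ wstarR b₁ b₂ b₃ G μ ε := by
    unfold wstarR
    split_ifs with h
    · have hub : ∀ u ∈ WL b₁ b₂ b₃ G μ 0, u ≤ sInf (WR b₁ b₂ b₃ G μ ε) := by
        intro u hu
        refine le_csInf h (fun r hr => ?_)
        by_contra hru
        push_neg at hru
        have hrW0 : r ∈ WL b₁ b₂ b₃ G μ 0 :=
          WL_downward hb₁ hb₁₂ hμ hfull hGint hG1 hG3 hGc1 hGc3 hu (le_refl 0)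
            hr.1 hru
        have h1 : G r ≤ condT b₁ b₂ b₃ G μ
            (vstar b₁ b₂ b₃ G μ (wstarL b₁ b₂ b₃ G μ 0)) (wstarL b₁ b₂ b₃ G μ 0) :=
          M_ge_G hb₁ hb₁₂ hμ hfull hGint hG1 hG3 hGc1 hGc3 hrW0 (le_wstarL hrW0)
        have h2 := hr.2
        rw [hTdef] at h2
        linarith
      unfold wstarL
      split_ifs with h0
      · refine sSup_le ?_
        rintro x ⟨y, hy, rfl⟩
        exact EReal.coe_le_coe_iff.2 (hub y hy)
      · exact EReal.coe_le_coe_iff.2 (le_csInf h (fun r hr => hr.1.1.le))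
    · exact wstarL_le_b₃ hb₂₃ 0
  rcases eq_or_lt_of_le hR1 with heq | hlt
  · rw [← heq, sub_self, abs_zero]
    exact hε.le
  obtain ⟨wsr, hwsr, hwsrb₂⟩ := ereal_real_of_lt_top hwsb₂ (lt_of_lt_of_le hlt le_top)
  rw [hwsr] at hlt ⊢
  rw [hwsr] at hTdef
  -- points of I₃ not in WR are bounded by T* + ε
  have hnotWR : ∀ z : ℝ, (b₂ < z ∧ (z : EReal) < b₃) → z ∉ WR b₁ b₂ b₃ G μ ε →
      G z ≤ condT b₁ b₂ b₃ G μ (vstar b₁ b₂ b₃ G μ ((wsr : ℝ) : EReal))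
        ((wsr : ℝ) : EReal) + ε := by
    intro z hzI hz
    by_contra hc
    push_neg at hc
    exact hz ⟨hzI, by rw [hTdef]; linarith⟩
  -- R-upper
  have hupper : condT b₁ b₂ b₃ G μ (vstar b₁ b₂ b₃ G μ (wstarR b₁ b₂ b₃ G μ ε))
      (wstarR b₁ b₂ b₃ G μ ε)
      ≤ condT b₁ b₂ b₃ G μ (vstar b₁ b₂ b₃ G μ ((wsr : ℝ) : EReal))
        ((wsr : ℝ) : EReal) + ε := by
    have hGyle : ∀ y : ℝ, (b₂ < y ∧ (y : EReal) < b₃) →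
        ((wsr : ℝ) : EReal) < (y : EReal) → (y : EReal) ≤ wstarR b₁ b₂ b₃ G μ ε →
        G y ≤ condT b₁ b₂ b₃ G μ (vstar b₁ b₂ b₃ G μ ((wsr : ℝ) : EReal))
          ((wsr : ℝ) : EReal) + ε := by
      by_cases hWR : (WR b₁ b₂ b₃ G μ ε).Nonempty
      · have hRdef : wstarR b₁ b₂ b₃ G μ ε = ((sInf (WR b₁ b₂ b₃ G μ ε) : ℝ) : EReal) := by
          unfold wstarR; rw [if_pos hWR]
        intro y hy _ h2
        rw [hRdef] at h2
        rcases eq_or_lt_of_le h2 with heq2 | hlt2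
        · have hy_eq : y = sInf (WR b₁ b₂ b₃ G μ ε) := by exact_mod_cast heq2
          refine G_le_of_forall_lt hGc3 hy (le_refl b₂) hy.1 ?_
          intro z hz1 hz2
          have hzI : b₂ < z ∧ (z : EReal) < b₃ :=
            ⟨hz1, lt_trans (EReal.coe_lt_coe_iff.2 hz2) hy.2⟩
          refine hnotWR z hzI (fun hzWR => ?_)
          have := csInf_le hbddWR hzWR
          rw [← hy_eq] at this
          exact absurd this (not_le.2 hz2)
        · have hy_lt : y < sInf (WR b₁ b₂ b₃ G μ ε) := EReal.coe_lt_coe_iff.1 hlt2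
          refine hnotWR y hy (fun hyWR => ?_)
          exact absurd (csInf_le hbddWR hyWR) (not_le.2 hy_lt)
      · intro y hy _ _
        refine hnotWR y hy (fun hyWR => hWR ⟨y, hyWR⟩)
    have happ : condT b₁ b₂ b₃ G μ (vstar b₁ b₂ b₃ G μ (wstarR b₁ b₂ b₃ G μ ε))
        (wstarR b₁ b₂ b₃ G μ ε)
        ≤ max (condT b₁ b₂ b₃ G μ (vstar b₁ b₂ b₃ G μ (wstarR b₁ b₂ b₃ G μ ε))
            ((wsr : ℝ) : EReal))
          (condT b₁ b₂ b₃ G μ (vstar b₁ b₂ b₃ G μ ((wsr : ℝ) : EReal))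
            ((wsr : ℝ) : EReal) + ε) :=
      condT_le_max_right hb₁ hb₁₂ hμ hfull hGint
        (vstar_le hb₁ (wstarR b₁ b₂ b₃ G μ ε)) (by exact_mod_cast hwsrb₂) hlt.le hGyle
    have hA : condT b₁ b₂ b₃ G μ (vstar b₁ b₂ b₃ G μ (wstarR b₁ b₂ b₃ G μ ε))
        ((wsr : ℝ) : EReal)
        ≤ condT b₁ b₂ b₃ G μ (vstar b₁ b₂ b₃ G μ ((wsr : ℝ) : EReal))
          ((wsr : ℝ) : EReal) :=
      claimA hb₁ hb₁₂ hμ hfull hGint hG1 hGc1 (by exact_mod_cast hwsrb₂)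
        (vstar_nonneg hb₁ _) (vstar_le hb₁ _)
    refine happ.trans (max_le (by linarith) (le_refl _))
  -- R-lower
  have hlower : condT b₁ b₂ b₃ G μ (vstar b₁ b₂ b₃ G μ ((wsr : ℝ) : EReal))
      ((wsr : ℝ) : EReal)
      ≤ condT b₁ b₂ b₃ G μ (vstar b₁ b₂ b₃ G μ (wstarR b₁ b₂ b₃ G μ ε))
        (wstarR b₁ b₂ b₃ G μ ε) := by
    obtain ⟨r, hr1, hr2⟩ := EReal.lt_iff_exists_real_btwn.1 hlt
    have hwr : wsr < r := EReal.coe_lt_coe_iff.1 hr1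
    obtain ⟨hwn, hwnt⟩ := seq_up hwr
    set wn : ℕ → ℝ := fun n => wsr + (r - wsr) / ((n : ℝ) + 2) with hwndef
    have hwnI : ∀ n, b₂ < wn n ∧ ((wn n : ℝ) : EReal) < b₃ := by
      intro n
      refine ⟨lt_of_le_of_lt hwsrb₂ (hwn n).1, ?_⟩
      calc ((wn n : ℝ) : EReal) < (r : EReal) := EReal.coe_lt_coe_iff.2 (hwn n).2
        _ < wstarR b₁ b₂ b₃ G μ ε := hr2
        _ ≤ b₃ := wstarR_le_b₃ hb₂₃ ε
    have hwnltR : ∀ n, ((wn n : ℝ) : EReal) < wstarR b₁ b₂ b₃ G μ ε := by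
      intro n
      calc ((wn n : ℝ) : EReal) < (r : EReal) := EReal.coe_lt_coe_iff.2 (hwn n).2
        _ < wstarR b₁ b₂ b₃ G μ ε := hr2
    have hwnnot : ∀ n, wn n ∉ WL b₁ b₂ b₃ G μ 0 := by
      intro n
      refine notin_WL_of_gt_wstarL ?_
      rw [hwsr]
      exact EReal.coe_lt_coe_iff.2 (hwn n).1
    have hMwnG : ∀ n, condT b₁ b₂ b₃ G μ (vstar b₁ b₂ b₃ G μ (wn n)) (wn n)
        ≤ G (wn n) + 0 := fun n => notin_WL_ge hGc3 (hwnI n) (hwnnot n)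
    have hstep : ∀ n, condT b₁ b₂ b₃ G μ (vstar b₁ b₂ b₃ G μ ((wn n : ℝ) : EReal))
        ((wn n : ℝ) : EReal)
        ≤ condT b₁ b₂ b₃ G μ (vstar b₁ b₂ b₃ G μ (wstarR b₁ b₂ b₃ G μ ε))
          (wstarR b₁ b₂ b₃ G μ ε) := by
      intro n
      have hmin : min (condT b₁ b₂ b₃ G μ (vstar b₁ b₂ b₃ G μ ((wn n : ℝ) : EReal))
          ((wn n : ℝ) : EReal)) (G (wn n))
          ≤ condT b₁ b₂ b₃ G μ (vstar b₁ b₂ b₃ G μ ((wn n : ℝ) : EReal))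
            (wstarR b₁ b₂ b₃ G μ ε) := by
        refine min_le_condT_right hb₁ hb₁₂ hμ hfull hGint (vstar_le hb₁ _)
          (by exact_mod_cast (hwnI n).1.le) (hwnltR n).le ?_
        intro y hy h1 _
        exact hG3 (hwnI n) hy (by exact_mod_cast h1.le)
      have hA2 : condT b₁ b₂ b₃ G μ (vstar b₁ b₂ b₃ G μ ((wn n : ℝ) : EReal))
          (wstarR b₁ b₂ b₃ G μ ε)
          ≤ condT b₁ b₂ b₃ G μ (vstar b₁ b₂ b₃ G μ (wstarR b₁ b₂ b₃ G μ ε))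
            (wstarR b₁ b₂ b₃ G μ ε) :=
        claimA hb₁ hb₁₂ hμ hfull hGint hG1 hGc1
          (le_trans (by exact_mod_cast hwsrb₂) hlt.le)
          (vstar_nonneg hb₁ _) (vstar_le hb₁ _)
      have hMG := hMwnG n
      rcases min_cases (condT b₁ b₂ b₃ G μ (vstar b₁ b₂ b₃ G μ ((wn n : ℝ) : EReal))
          ((wn n : ℝ) : EReal)) (G (wn n)) with ⟨he, _⟩ | ⟨he, hlt3⟩
      · rw [he] at hmin; exact hmin.trans hA2
      · rw [he] at hmin
        have : condT b₁ b₂ b₃ G μ (vstar b₁ b₂ b₃ G μ ((wn n : ℝ) : EReal))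
            ((wn n : ℝ) : EReal) ≤ G (wn n) := by linarith
        exact le_trans this (hmin.trans hA2)
    have hcl : ∀ n, condT b₁ b₂ b₃ G μ (vstar b₁ b₂ b₃ G μ ((wsr : ℝ) : EReal))
        ((wn n : ℝ) : EReal)
        ≤ condT b₁ b₂ b₃ G μ (vstar b₁ b₂ b₃ G μ ((wn n : ℝ) : EReal))
          ((wn n : ℝ) : EReal) := fun n =>
      claimA hb₁ hb₁₂ hμ hfull hGint hG1 hGc1 (by exact_mod_cast (hwnI n).1.le)
        (vstar_nonneg hb₁ _) (vstar_le hb₁ _)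
    have htt : Tendsto (fun n => condT b₁ b₂ b₃ G μ
        (vstar b₁ b₂ b₃ G μ ((wsr : ℝ) : EReal)) ((wn n : ℝ) : EReal)) atTop
        (𝓝 (condT b₁ b₂ b₃ G μ (vstar b₁ b₂ b₃ G μ ((wsr : ℝ) : EReal))
          ((wsr : ℝ) : EReal))) :=
      tendsto_condT_right hb₁₂ hμ hfull hGint (vstar_le hb₁ _) hwsrb₂
        (fun n => (hwn n).1.le) hwnt
    exact le_of_tendsto htt (Filter.Eventually.of_forall
      (fun n => (hcl n).trans (hstep n)))
  rw [abs_le]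
  constructor <;> linarith

end PartR
theorem statement13
    (b₁ b₂ : ℝ) (b₃ : EReal) (G : ℝ → ℝ) (μ : Measure ℝ)
    (hb₁ : 0 ≤ b₁) (hb₁₂ : b₁ < b₂) (hb₂₃ : (b₂ : EReal) < b₃)
    (hμ : IsProbabilityMeasure μ) (hμneg : μ (Iio 0) = 0)
    (hGint : Integrable G μ)
    (hfull : ∀ a b : ℝ, a < b → Ioo a b ⊆ ITset b₁ b₂ b₃ → 0 < μ (Ioo a b))
    (hG1 : MonotoneOn G (Ioo 0 b₁))
    (hG2 : StrictAntiOn G (Icc b₁ b₂))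
    (hG3 : MonotoneOn G {y : ℝ | b₂ < y ∧ (y : EReal) < b₃})
    (hGc1 : ContinuousOn G (Ico 0 b₁))
    (hGc3 : ContinuousOn G {y : ℝ | b₂ < y ∧ (y : EReal) < b₃}) :
    ∀ ε : ℝ, 0 < ε →
      |condT b₁ b₂ b₃ G μ (vstar b₁ b₂ b₃ G μ (wstarL b₁ b₂ b₃ G μ ε))
          (wstarL b₁ b₂ b₃ G μ ε)
        - condT b₁ b₂ b₃ G μ (vstarstar b₁ b₂ b₃ G μ) (wstar b₁ b₂ b₃ G μ)| ≤ ε ∧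
      |condT b₁ b₂ b₃ G μ (vstar b₁ b₂ b₃ G μ (wstarR b₁ b₂ b₃ G μ ε))
          (wstarR b₁ b₂ b₃ G μ ε)
        - condT b₁ b₂ b₃ G μ (vstarstar b₁ b₂ b₃ G μ) (wstar b₁ b₂ b₃ G μ)| ≤ ε := by
  intro ε hε
  constructor
  · exact partL hb₁ hb₁₂ hb₂₃ hμ hfull hGint hG1 hG3 hGc1 hGc3 hε
  · exact partR hb₁ hb₁₂ hb₂₃ hμ hfull hGint hG1 hG3 hGc1 hGc3 hε
end

section
/- In the continuous balance-point setting, assume in addition that G is continuous on [0, b₁) and on I₃. Then for every w ∈ I₃ and every ε > 0 there exists ε₁ ∈ (0, ε] such that: if v*_{R,ε}(w) ∈ (0, b₁), then T(v*_{R,ε}(w), w; G) < G(v*_{R,ε}(w)) − ε₁; and if v*_{L,ε}(w) ∈ (0, b₁), then G(v*_{L,ε}(w)) < T(v*_{L,ε}(w), w; G) − ε₁. -/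
open MeasureTheory Set Filter Topology

/-- `V_{L,ε}(w) = {v ∈ I₁ : G(v) < T(v*(w),w;G) − ε}`. -/
noncomputable def VL (b₁ b₂ : ℝ) (b₃ : EReal) (G : ℝ → ℝ) (μ : Measure ℝ)
    (ε : ℝ) (w : EReal) : Set ℝ :=
  {v | v ∈ Ioo 0 b₁ ∧ G v < condT b₁ b₂ b₃ G μ (vstar b₁ b₂ b₃ G μ w) w - ε}

open Classical in
/-- `v*_{L,ε}(w)`. -/
noncomputable def vstarL (b₁ b₂ : ℝ) (b₃ : EReal) (G : ℝ → ℝ) (μ : Measure ℝ)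
    (ε : ℝ) (w : EReal) : ℝ :=
  if (VL b₁ b₂ b₃ G μ ε w).Nonempty then sSup (VL b₁ b₂ b₃ G μ ε w) else 0


section Helpers

lemma st14_measITset (b₁ b₂ : ℝ) (b₃ : EReal) : MeasurableSet (ITset b₁ b₂ b₃) := by
  have h3 : {y : ℝ | b₂ < y ∧ (y : EReal) < b₃}
      = Ioi b₂ ∩ ((fun y : ℝ => (y : EReal)) ⁻¹' Iio b₃) := rfl
  unfold ITset
  rw [h3]
  exact (measurableSet_Ioo.union measurableSet_Icc).union
    (measurableSet_Ioi.inter (measurable_coe_real_ereal measurableSet_Iio))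

lemma st14_condSet_coe (b₁ b₂ : ℝ) (b₃ : EReal) (v w : ℝ) :
    condSet b₁ b₂ b₃ v (w : EReal) = Icc v w ∩ (ITset b₁ b₂ b₃ ∪ {0}) := by
  unfold condSet
  congr 1
  ext y
  simp [EReal.coe_le_coe_iff]

lemma st14_measCondSet (b₁ b₂ : ℝ) (b₃ : EReal) (v w : ℝ) :
    MeasurableSet (condSet b₁ b₂ b₃ v (w : EReal)) := by
  rw [st14_condSet_coe]
  exact measurableSet_Icc.inter
    ((st14_measITset b₁ b₂ b₃).union (measurableSet_singleton 0))

lemma st14_split (b₁ b₂ : ℝ) (b₃ : EReal) {v v' w : ℝ}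
    (hv : 0 ≤ v) (hvv' : v ≤ v') (hv' : v' ≤ b₁) (hbw : b₁ ≤ w) :
    condSet b₁ b₂ b₃ v (w : EReal) = Ico v v' ∪ condSet b₁ b₂ b₃ v' (w : EReal) := by
  rw [st14_condSet_coe, st14_condSet_coe, ← Ico_union_Icc_eq_Icc hvv' (hv'.trans hbw),
    union_inter_distrib_right]
  congr 1
  rw [inter_eq_left]
  intro y hy
  rcases eq_or_lt_of_le (hv.trans hy.1) with h0 | h0
  · exact Or.inr (by simp [← h0])
  · exact Or.inl (Or.inl (Or.inl ⟨h0, lt_of_lt_of_le hy.2 hv'⟩))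

lemma st14_disj (b₁ b₂ : ℝ) (b₃ : EReal) (v v' : ℝ) (w : EReal) :
    Disjoint (Ico v v') (condSet b₁ b₂ b₃ v' w) := by
  rw [Set.disjoint_left]
  intro y hy hy'
  exact absurd hy'.1.1 (not_le.2 hy.2)

lemma st14_Ioo_sub (b₁ b₂ : ℝ) (b₃ : EReal) {v w : ℝ} (hv : v ≤ b₂)
    (hw3 : (w : EReal) < b₃) :
    Ioo b₂ w ⊆ condSet b₁ b₂ b₃ v (w : EReal) := by
  intro y hy
  refine ⟨⟨hv.trans hy.1.le, ?_⟩, Or.inl (Or.inr ⟨hy.1, lt_trans ?_ hw3⟩)⟩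
  · exact_mod_cast hy.2.le
  · exact_mod_cast hy.2

lemma st14_monoIco {b₁ : ℝ} {G : ℝ → ℝ} (hG1 : MonotoneOn G (Ioo 0 b₁))
    (hGc1 : ContinuousOn G (Ico 0 b₁)) : MonotoneOn G (Ico 0 b₁) := by
  intro x hx y hy hxy
  rcases eq_or_lt_of_le hx.1 with h0 | h0
  · rcases eq_or_lt_of_le hxy with h1 | h1
    · rw [h1]
    · have hy0 : 0 < y := h0 ▸ h1
      have hyb : y ∈ Ioo 0 b₁ := ⟨hy0, hy.2⟩
      have hb : (0:ℝ) < b₁ := lt_trans hy0 hy.2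
      rw [← h0]
      have hc : Filter.Tendsto G (nhdsWithin 0 (Ioo 0 y)) (nhds (G 0)) := by
        have ht := (hGc1 0 ⟨le_refl _, hb⟩).tendsto
        exact ht.mono_left (nhdsWithin_mono _ (fun z hz => ⟨hz.1.le, lt_trans hz.2 hy.2⟩))
      have := left_nhdsWithin_Ioo_neBot hy0
      refine le_of_tendsto hc ?_
      filter_upwards [self_mem_nhdsWithin] with z hz
      exact hG1 ⟨hz.1, lt_trans hz.2 hy.2⟩ hyb hz.2.le
  · exact hG1 ⟨h0, hx.2⟩ ⟨lt_of_lt_of_le h0 hxy, hy.2⟩ hxy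

lemma st14_leftLim {b₁ : ℝ} {G : ℝ → ℝ} (hGc1 : ContinuousOn G (Ico 0 b₁))
    {v : ℝ} (hv : v ∈ Ioo 0 b₁) : Function.leftLim G v = G v := by
  have hca : ContinuousAt G v := hGc1.continuousAt (Ico_mem_nhds hv.1 hv.2)
  exact leftLim_eq_of_tendsto
    (hca.tendsto.mono_left nhdsWithin_le_nhds)

lemma st14_int_le {G : ℝ → ℝ} {μ : Measure ℝ} [IsFiniteMeasure μ] (hGint : Integrable G μ)
    {v v' L : ℝ} (hL : ∀ y ∈ Ico v v', G y ≤ L) :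
    ∫ y in Ico v v', G y ∂μ ≤ L * (μ (Ico v v')).toReal := by
  have h := setIntegral_mono_on hGint.integrableOn
    (integrableOn_const (C := L) (measure_ne_top μ _) enorm_ne_top) measurableSet_Ico hL
  rwa [setIntegral_const, smul_eq_mul, mul_comm] at h

lemma st14_int_ge {G : ℝ → ℝ} {μ : Measure ℝ} [IsFiniteMeasure μ] (hGint : Integrable G μ)
    {v v' L : ℝ} (hL : ∀ y ∈ Ico v v', L ≤ G y) :
    L * (μ (Ico v v')).toReal ≤ ∫ y in Ico v v', G y ∂μ := by
  have h := setIntegral_mono_on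
    (integrableOn_const (C := L) (measure_ne_top μ _) enorm_ne_top) hGint.integrableOn
    measurableSet_Ico hL
  rwa [setIntegral_const, smul_eq_mul, mul_comm] at h

end Helpers

theorem statement14
    (b₁ b₂ : ℝ) (b₃ : EReal) (G : ℝ → ℝ) (μ : Measure ℝ)
    (hb₁ : 0 ≤ b₁) (hb₁₂ : b₁ < b₂) (hb₂₃ : (b₂ : EReal) < b₃)
    (hμ : IsProbabilityMeasure μ) (hμneg : μ (Iio 0) = 0)
    (hGint : Integrable G μ)
    (hfull : ∀ a b : ℝ, a < b → Ioo a b ⊆ ITset b₁ b₂ b₃ → 0 < μ (Ioo a b))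
    (hG1 : MonotoneOn G (Ioo 0 b₁))
    (hG2 : StrictAntiOn G (Icc b₁ b₂))
    (hG3 : MonotoneOn G {y : ℝ | b₂ < y ∧ (y : EReal) < b₃})
    (hGc1 : ContinuousOn G (Ico 0 b₁))
    (hGc3 : ContinuousOn G {y : ℝ | b₂ < y ∧ (y : EReal) < b₃}) :
    ∀ w : ℝ, b₂ < w → (w : EReal) < b₃ → ∀ ε : ℝ, 0 < ε →
      ∃ ε₁ : ℝ, 0 < ε₁ ∧ ε₁ ≤ ε ∧
        (vstarR b₁ b₂ b₃ G μ ε (w : EReal) ∈ Ioo 0 b₁ →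
          condT b₁ b₂ b₃ G μ (vstarR b₁ b₂ b₃ G μ ε (w : EReal)) (w : EReal)
            < G (vstarR b₁ b₂ b₃ G μ ε (w : EReal)) - ε₁) ∧
        (vstarL b₁ b₂ b₃ G μ ε (w : EReal) ∈ Ioo 0 b₁ →
          G (vstarL b₁ b₂ b₃ G μ ε (w : EReal))
            < condT b₁ b₂ b₃ G μ (vstarL b₁ b₂ b₃ G μ ε (w : EReal)) (w : EReal) - ε₁) := by
  intro w hw2 hw3 ε hε
  have hb1w : b₁ ≤ w := (hb₁₂.trans hw2).le
  set c : ℝ := (μ (Ioo b₂ w)).toReal with hc_def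
  have hIooIT : Ioo b₂ w ⊆ ITset b₁ b₂ b₃ := by
    intro y hy
    exact Or.inr ⟨hy.1, lt_trans (by exact_mod_cast hy.2) hw3⟩
  have hcpos : 0 < c := ENNReal.toReal_pos (hfull b₂ w hw2 hIooIT).ne' (measure_ne_top μ _)
  have hc1 : c ≤ 1 := by
    have h := prob_le_one (μ := μ) (s := Ioo b₂ w)
    have h2 := ENNReal.toReal_mono ENNReal.one_ne_top h
    simpa using h2
  have hm : ∀ v : ℝ, v ≤ b₂ →
      c ≤ (μ (condSet b₁ b₂ b₃ v (w : EReal))).toReal ∧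
      (μ (condSet b₁ b₂ b₃ v (w : EReal))).toReal ≤ 1 := by
    intro v hv
    constructor
    · exact ENNReal.toReal_mono (measure_ne_top μ _)
        (measure_mono (st14_Ioo_sub b₁ b₂ b₃ hv hw3))
    · have h2 := ENNReal.toReal_mono ENNReal.one_ne_top (prob_le_one (μ := μ)
        (s := condSet b₁ b₂ b₃ v (w : EReal)))
      simpa using h2
  refine ⟨ε * c / 2, by positivity, by nlinarith, ?_, ?_⟩
  · -- part (a)
    intro hvR
    have hVRne : (VR b₁ b₂ b₃ G μ ε (w : EReal)).Nonempty := by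
      by_contra h
      rw [vstarR, if_neg h] at hvR
      exact lt_irrefl b₁ hvR.2
    set vR := vstarR b₁ b₂ b₃ G μ ε (w : EReal) with hvRdef
    have hvReq : vR = sInf (VR b₁ b₂ b₃ G μ ε (w : EReal)) := by
      rw [hvRdef, vstarR, if_pos hVRne]
    have hbddR : BddBelow (VR b₁ b₂ b₃ G μ ε (w : EReal)) :=
      ⟨0, fun x hx => hx.1.1.le⟩
    have key : ∀ v ∈ VR b₁ b₂ b₃ G μ ε (w : EReal),
        condT b₁ b₂ b₃ G μ vR (w : EReal) ≤ G v - ε * c := by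
      intro v hv
      have hvmem : v ∈ Ioo 0 b₁ := hv.1
      have hvRle : vR ≤ v := hvReq ▸ csInf_le hbddR hv
      have hTv : condT b₁ b₂ b₃ G μ v (w : EReal) < G v - ε := by
        have h2 := hv.2
        rwa [st14_leftLim hGc1 hvmem] at h2
      have hsplit := st14_split b₁ b₂ b₃ hvR.1.le hvRle hvmem.2.le hb1w
      have hI : (∫ y in condSet b₁ b₂ b₃ vR (w : EReal), G y ∂μ)
          = (∫ y in Ico vR v, G y ∂μ)
            + ∫ y in condSet b₁ b₂ b₃ v (w : EReal), G y ∂μ := by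
        rw [hsplit]
        exact setIntegral_union (st14_disj b₁ b₂ b₃ vR v (w : EReal))
          (st14_measCondSet b₁ b₂ b₃ v w) hGint.integrableOn hGint.integrableOn
      have hMeq : (μ (condSet b₁ b₂ b₃ vR (w : EReal))).toReal
          = (μ (Ico vR v)).toReal + (μ (condSet b₁ b₂ b₃ v (w : EReal))).toReal := by
        rw [hsplit, measure_union (st14_disj b₁ b₂ b₃ vR v (w : EReal))
          (st14_measCondSet b₁ b₂ b₃ v w),
          ENNReal.toReal_add (measure_ne_top μ _) (measure_ne_top μ _)]
      have hm1 : 0 ≤ (μ (Ico vR v)).toReal := ENNReal.toReal_nonneg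
      have hm2c : c ≤ (μ (condSet b₁ b₂ b₃ v (w : EReal))).toReal :=
        (hm v (hvmem.2.le.trans hb₁₂.le)).1
      have hm2pos : 0 < (μ (condSet b₁ b₂ b₃ v (w : EReal))).toReal :=
        lt_of_lt_of_le hcpos hm2c
      have hsum1 : (μ (Ico vR v)).toReal + (μ (condSet b₁ b₂ b₃ v (w : EReal))).toReal ≤ 1 := by
        rw [← hMeq]; exact (hm vR (hvR.2.le.trans hb₁₂.le)).2
      have hI1le : (∫ y in Ico vR v, G y ∂μ) ≤ G v * (μ (Ico vR v)).toReal :=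
        st14_int_le hGint (fun y hy =>
          hG1 ⟨lt_of_lt_of_le hvR.1 hy.1, lt_trans hy.2 hvmem.2⟩ hvmem hy.2.le)
      have hI2le : (∫ y in condSet b₁ b₂ b₃ v (w : EReal), G y ∂μ)
          ≤ (G v - ε) * (μ (condSet b₁ b₂ b₃ v (w : EReal))).toReal := by
        rw [condT, div_lt_iff₀ hm2pos] at hTv
        exact hTv.le
      rw [condT, hI, hMeq, div_le_iff₀ (by linarith)]
      nlinarith [mul_le_mul_of_nonneg_left hsum1 (mul_nonneg hε.le hcpos.le),
        mul_le_mul_of_nonneg_left hm2c hε.le]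
    have hTle : condT b₁ b₂ b₃ G μ vR (w : EReal) ≤ G vR - ε * c := by
      by_contra hcon
      push_neg at hcon
      have hca : ContinuousAt G vR := hGc1.continuousAt (Ico_mem_nhds hvR.1 hvR.2)
      have hev : ∀ᶠ x in nhds vR,
          G x < condT b₁ b₂ b₃ G μ vR (w : EReal) + ε * c :=
        hca.tendsto.eventually_lt_const (by linarith)
      rcases Metric.eventually_nhds_iff.1 hev with ⟨δ, hδ, hball⟩
      rcases Real.lt_sInf_add_pos hVRne hδ with ⟨v, hvmem, hvlt⟩
      have h1 : vR ≤ v := hvReq ▸ csInf_le hbddR hvmem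
      have hvlt' : v < vR + δ := by rw [hvReq]; exact hvlt
      have h2 : G v < condT b₁ b₂ b₃ G μ vR (w : EReal) + ε * c := by
        apply hball
        rw [Real.dist_eq, abs_lt]
        exact ⟨by linarith, by linarith⟩
      have h3 := key v hvmem
      linarith
    have : 0 < ε * c := mul_pos hε hcpos
    linarith
  · -- part (b)
    intro hvL
    have hVLne : (VL b₁ b₂ b₃ G μ ε (w : EReal)).Nonempty := by
      by_contra h
      rw [vstarL, if_neg h] at hvL
      exact lt_irrefl 0 hvL.1
    set vL := vstarL b₁ b₂ b₃ G μ ε (w : EReal) with hvLdef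
    have hvLeq : vL = sSup (VL b₁ b₂ b₃ G μ ε (w : EReal)) := by
      rw [hvLdef, vstarL, if_pos hVLne]
    have hbddL : BddAbove (VL b₁ b₂ b₃ G μ ε (w : EReal)) :=
      ⟨b₁, fun x hx => hx.1.2.le⟩
    set vS := vstar b₁ b₂ b₃ G μ (w : EReal) with hvSdef
    have hvSb : 0 ≤ vS ∧ vS ≤ b₁ := by
      rw [hvSdef, vstar, vstarR]
      split_ifs with h
      · rcases h with ⟨x, hx⟩
        exact ⟨le_csInf ⟨x, hx⟩ (fun y hy => hy.1.1.le),
          (csInf_le ⟨0, fun y hy => hy.1.1.le⟩ hx).trans hx.1.2.le⟩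
      · exact ⟨hb₁, le_refl _⟩
    have hGvLK : G vL ≤ condT b₁ b₂ b₃ G μ vS (w : EReal) - ε := by
      by_contra hcon
      push_neg at hcon
      have hca : ContinuousAt G vL := hGc1.continuousAt (Ico_mem_nhds hvL.1 hvL.2)
      have hev : ∀ᶠ x in nhds vL,
          condT b₁ b₂ b₃ G μ vS (w : EReal) - ε < G x :=
        hca.tendsto.eventually_const_lt hcon
      rcases Metric.eventually_nhds_iff.1 hev with ⟨δ, hδ, hball⟩
      rcases Real.add_neg_lt_sSup hVLne (neg_lt_zero.2 hδ) with ⟨v, hvmem, hvgt⟩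
      have h1 : v ≤ vL := hvLeq ▸ le_csSup hbddL hvmem
      have hvgt' : vL - δ < v := by
        have := hvLeq ▸ hvgt
        linarith [this]
      have h2 : condT b₁ b₂ b₃ G μ vS (w : EReal) - ε < G v := by
        apply hball
        rw [Real.dist_eq, abs_lt]
        exact ⟨by linarith, by linarith⟩
      have h4 : G v < condT b₁ b₂ b₃ G μ vS (w : EReal) - ε := by
        rw [hvSdef]
        exact hvmem.2
      linarith
    rcases le_or_gt vL vS with hcase | hcase
    · -- vL ≤ vS : split condSet vL
      have hsplit := st14_split b₁ b₂ b₃ hvL.1.le hcase hvSb.2 hb1w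
      have hI : (∫ y in condSet b₁ b₂ b₃ vL (w : EReal), G y ∂μ)
          = (∫ y in Ico vL vS, G y ∂μ)
            + ∫ y in condSet b₁ b₂ b₃ vS (w : EReal), G y ∂μ := by
        rw [hsplit]
        exact setIntegral_union (st14_disj b₁ b₂ b₃ vL vS (w : EReal))
          (st14_measCondSet b₁ b₂ b₃ vS w) hGint.integrableOn hGint.integrableOn
      have hMeq : (μ (condSet b₁ b₂ b₃ vL (w : EReal))).toReal
          = (μ (Ico vL vS)).toReal + (μ (condSet b₁ b₂ b₃ vS (w : EReal))).toReal := by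
        rw [hsplit, measure_union (st14_disj b₁ b₂ b₃ vL vS (w : EReal))
          (st14_measCondSet b₁ b₂ b₃ vS w),
          ENNReal.toReal_add (measure_ne_top μ _) (measure_ne_top μ _)]
      have hm1 : 0 ≤ (μ (Ico vL vS)).toReal := ENNReal.toReal_nonneg
      have hm2c : c ≤ (μ (condSet b₁ b₂ b₃ vS (w : EReal))).toReal :=
        (hm vS (hvSb.2.trans hb₁₂.le)).1
      have hm2pos : 0 < (μ (condSet b₁ b₂ b₃ vS (w : EReal))).toReal :=
        lt_of_lt_of_le hcpos hm2c
      have hsum1 : (μ (Ico vL vS)).toReal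
          + (μ (condSet b₁ b₂ b₃ vS (w : EReal))).toReal ≤ 1 := by
        rw [← hMeq]; exact (hm vL (hvL.2.le.trans hb₁₂.le)).2
      have hI1ge : G vL * (μ (Ico vL vS)).toReal ≤ ∫ y in Ico vL vS, G y ∂μ :=
        st14_int_ge hGint (fun y hy =>
          hG1 hvL ⟨lt_of_lt_of_le hvL.1 hy.1, lt_of_lt_of_le hy.2 hvSb.2⟩ hy.1)
      have hI2eq : (∫ y in condSet b₁ b₂ b₃ vS (w : EReal), G y ∂μ)
          = condT b₁ b₂ b₃ G μ vS (w : EReal)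
            * (μ (condSet b₁ b₂ b₃ vS (w : EReal))).toReal := by
        rw [condT, div_mul_cancel₀ _ hm2pos.ne']
      rw [condT, hI, hMeq, lt_sub_iff_add_lt, lt_div_iff₀ (by linarith)]
      nlinarith [mul_le_mul_of_nonneg_left hsum1 (mul_nonneg hε.le hcpos.le),
        mul_le_mul_of_nonneg_left hm2c hε.le, mul_pos hε hcpos]
    · -- vS < vL : split condSet vS
      have hsplit := st14_split b₁ b₂ b₃ hvSb.1 hcase.le hvL.2.le hb1w
      have hI : (∫ y in condSet b₁ b₂ b₃ vS (w : EReal), G y ∂μ)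
          = (∫ y in Ico vS vL, G y ∂μ)
            + ∫ y in condSet b₁ b₂ b₃ vL (w : EReal), G y ∂μ := by
        rw [hsplit]
        exact setIntegral_union (st14_disj b₁ b₂ b₃ vS vL (w : EReal))
          (st14_measCondSet b₁ b₂ b₃ vL w) hGint.integrableOn hGint.integrableOn
      have hMeq : (μ (condSet b₁ b₂ b₃ vS (w : EReal))).toReal
          = (μ (Ico vS vL)).toReal + (μ (condSet b₁ b₂ b₃ vL (w : EReal))).toReal := by
        rw [hsplit, measure_union (st14_disj b₁ b₂ b₃ vS vL (w : EReal))
          (st14_measCondSet b₁ b₂ b₃ vL w),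
          ENNReal.toReal_add (measure_ne_top μ _) (measure_ne_top μ _)]
      have hm1 : 0 ≤ (μ (Ico vS vL)).toReal := ENNReal.toReal_nonneg
      have hm2c : c ≤ (μ (condSet b₁ b₂ b₃ vL (w : EReal))).toReal :=
        (hm vL (hvL.2.le.trans hb₁₂.le)).1
      have hm2pos : 0 < (μ (condSet b₁ b₂ b₃ vL (w : EReal))).toReal :=
        lt_of_lt_of_le hcpos hm2c
      have hMpos : 0 < (μ (condSet b₁ b₂ b₃ vS (w : EReal))).toReal :=
        lt_of_lt_of_le hcpos (hm vS (hvSb.2.trans hb₁₂.le)).1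
      have hI1le : (∫ y in Ico vS vL, G y ∂μ) ≤ G vL * (μ (Ico vS vL)).toReal :=
        st14_int_le hGint (fun y hy =>
          st14_monoIco hG1 hGc1 ⟨le_trans hvSb.1 hy.1, lt_trans hy.2 hvL.2⟩
            ⟨hvL.1.le, hvL.2⟩ hy.2.le)
      have hKeq : condT b₁ b₂ b₃ G μ vS (w : EReal)
          * ((μ (Ico vS vL)).toReal + (μ (condSet b₁ b₂ b₃ vL (w : EReal))).toReal)
          = (∫ y in Ico vS vL, G y ∂μ)
            + ∫ y in condSet b₁ b₂ b₃ vL (w : EReal), G y ∂μ := by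
        rw [condT, hI, hMeq, div_mul_cancel₀]
        rw [← hMeq]
        exact hMpos.ne'
      have hI2eq : (∫ y in condSet b₁ b₂ b₃ vL (w : EReal), G y ∂μ)
          = condT b₁ b₂ b₃ G μ vL (w : EReal)
            * (μ (condSet b₁ b₂ b₃ vL (w : EReal))).toReal := by
        rw [condT, div_mul_cancel₀ _ hm2pos.ne']
      -- from the pieces: condT vL ≥ condT vS ≥ G vL + ε
      have hTge : condT b₁ b₂ b₃ G μ vS (w : EReal) ≤ condT b₁ b₂ b₃ G μ vL (w : EReal) := by
        nlinarith [mul_pos hε hm2pos]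
      nlinarith [mul_pos hε hcpos]
end

section
/- Let y ∈ ℝᵖ and let λ ∈ ℝᵖ have nonnegative nondecreasing entries. Then: (1) for every p×p permutation matrix Π, Prox_λ(Πy) = Π·Prox_λ(y); (2) for every coordinate i, [Prox_λ(y)]_i = sign(y_i)·[Prox_λ(|y|)]_i, where |y| = (|y_1|,…,|y_p|) and sign(t) equals 1 for t > 0, 0 for t = 0, and −1 for t < 0. In particular each coordinate [Prox_λ(y)]_i has the same sign as y_i. -/
open MeasureTheory Filter Finset Topology

/-- The nondecreasing rearrangement of the absolute values of the entries of `x`. -/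
noncomputable def sortedAbs {p : ℕ} (x : Fin p → ℝ) : Fin p → ℝ :=
  fun i => |x (Tuple.sort (fun j => |x j|) i)|

/-- The sorted ℓ1 norm `J_λ(x) = ∑ λ_i |x|_(i)`. -/
noncomputable def sortedL1 {p : ℕ} (lam x : Fin p → ℝ) : ℝ :=
  ∑ i, lam i * sortedAbs x i

/-- The SLOPE objective `(1/2)‖y - x‖² + J_λ(x)`. -/
noncomputable def slopeObj {p : ℕ} (lam y x : Fin p → ℝ) : ℝ :=
  (1 / 2) * ∑ i, (y i - x i) ^ 2 + sortedL1 lam x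

open Classical in
/-- The SLOPE proximal operator: the (unique) minimizer of the SLOPE objective. -/
noncomputable def slopeProx {p : ℕ} (lam y : Fin p → ℝ) : Fin p → ℝ :=
  if h : ∃ x : Fin p → ℝ, ∀ z : Fin p → ℝ, slopeObj lam y x ≤ slopeObj lam y z
  then h.choose else y

/- Auxiliary lemmas -/

lemma sortedAbs_eq_comp {p : ℕ} (x : Fin p → ℝ) :
    sortedAbs x = (fun j => |x j|) ∘ Tuple.sort (fun j => |x j|) := rfl

lemma sortedAbs_congr {p : ℕ} {x z : Fin p → ℝ} (h : ∀ i, |x i| = |z i|) :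
    sortedAbs x = sortedAbs z := by
  have hfun : (fun j => |x j|) = (fun j => |z j|) := funext h
  rw [sortedAbs_eq_comp, sortedAbs_eq_comp, hfun]

lemma sortedL1_congr {p : ℕ} (lam : Fin p → ℝ) {x z : Fin p → ℝ}
    (h : ∀ i, |x i| = |z i|) : sortedL1 lam x = sortedL1 lam z := by
  unfold sortedL1; rw [sortedAbs_congr h]

lemma sortedAbs_perm {p : ℕ} (x : Fin p → ℝ) (e : Equiv.Perm (Fin p)) :
    sortedAbs (x ∘ e) = sortedAbs x := by
  have : (fun j => |(x ∘ e) j|) = (fun j => |x j|) ∘ e := rfl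
  rw [sortedAbs_eq_comp, sortedAbs_eq_comp, this,
    Tuple.comp_perm_comp_sort_eq_comp_sort]

lemma sortedL1_perm {p : ℕ} (lam x : Fin p → ℝ) (e : Equiv.Perm (Fin p)) :
    sortedL1 lam (x ∘ e) = sortedL1 lam x := by
  unfold sortedL1; rw [sortedAbs_perm]

/-- Rearrangement: any permuted pairing is at most the sorted pairing. -/
lemma sum_mul_abs_perm_le {p : ℕ} (lam x : Fin p → ℝ) (hm : Monotone lam)
    (σ : Equiv.Perm (Fin p)) :
    ∑ i, lam i * |x (σ i)| ≤ sortedL1 lam x := by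
  set τ := Tuple.sort (fun j => |x j|) with hτ
  have hmono : Monotone (sortedAbs x) := by
    rw [sortedAbs_eq_comp]; exact Tuple.monotone_sort _
  have hmv : Monovary lam (sortedAbs x) := hm.monovary hmono
  have key := hmv.sum_mul_comp_perm_le_sum_mul (σ := σ.trans τ.symm)
  have hval : ∀ i, sortedAbs x ((σ.trans τ.symm) i) = |x (σ i)| := by
    intro i
    simp [sortedAbs, hτ]
  calc ∑ i, lam i * |x (σ i)| = ∑ i, lam i * sortedAbs x ((σ.trans τ.symm) i) := by
        simp_rw [hval]
    _ ≤ ∑ i, lam i * sortedAbs x i := key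
    _ = sortedL1 lam x := rfl

/-- Midpoint convexity of the sorted ℓ1 norm. -/
lemma sortedL1_midpoint {p : ℕ} (lam : Fin p → ℝ) (hn : ∀ i, 0 ≤ lam i)
    (hm : Monotone lam) (x z : Fin p → ℝ) :
    sortedL1 lam (fun i => (x i + z i) / 2) ≤ (sortedL1 lam x + sortedL1 lam z) / 2 := by
  set w : Fin p → ℝ := fun i => (x i + z i) / 2 with hw
  set τ := Tuple.sort (fun j => |w j|) with hτ
  have h1 : sortedL1 lam w = ∑ i, lam i * |w (τ i)| := rfl
  have h2 : ∀ i, lam i * |w (τ i)| ≤ lam i * (|x (τ i)| / 2 + |z (τ i)| / 2) := by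
    intro i
    apply mul_le_mul_of_nonneg_left _ (hn i)
    have := abs_add_le (x (τ i) / 2) (z (τ i) / 2)
    calc |w (τ i)| = |x (τ i) / 2 + z (τ i) / 2| := by rw [hw]; ring_nf
      _ ≤ |x (τ i) / 2| + |z (τ i) / 2| := abs_add_le _ _
      _ = |x (τ i)| / 2 + |z (τ i)| / 2 := by rw [abs_div, abs_div]; norm_num
  calc sortedL1 lam w = ∑ i, lam i * |w (τ i)| := h1
    _ ≤ ∑ i, lam i * (|x (τ i)| / 2 + |z (τ i)| / 2) := Finset.sum_le_sum fun i _ => h2 i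
    _ = (∑ i, lam i * |x (τ i)| + ∑ i, lam i * |z (τ i)|) / 2 := by
        rw [← Finset.sum_add_distrib, Finset.sum_div]
        congr 1; funext i; ring
    _ ≤ (sortedL1 lam x + sortedL1 lam z) / 2 := by
        have := sum_mul_abs_perm_le lam x hm τ
        have := sum_mul_abs_perm_le lam z hm τ
        linarith [sum_mul_abs_perm_le lam x hm τ, sum_mul_abs_perm_le lam z hm τ]

/-- Uniqueness of minimizers of the SLOPE objective. -/
lemma slope_min_unique {p : ℕ} (lam y : Fin p → ℝ) (hn : ∀ i, 0 ≤ lam i)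
    (hm : Monotone lam) {x u : Fin p → ℝ}
    (hx : ∀ z, slopeObj lam y x ≤ slopeObj lam y z)
    (hu : ∀ z, slopeObj lam y u ≤ slopeObj lam y z) : x = u := by
  by_contra hne
  have hxi : ∃ i, x i ≠ u i := by
    by_contra hall
    push_neg at hall
    exact hne (funext hall)
  obtain ⟨i0, hi0⟩ := hxi
  set m : Fin p → ℝ := fun i => (x i + u i) / 2 with hmdef
  have hxu : slopeObj lam y x = slopeObj lam y u := le_antisymm (hx u) (hu x)
  have hquad : ∑ i, (y i - m i) ^ 2
      = (∑ i, (y i - x i) ^ 2 + ∑ i, (y i - u i) ^ 2) / 2 - (∑ i, (x i - u i) ^ 2) / 4 := by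
    rw [← Finset.sum_add_distrib, Finset.sum_div, Finset.sum_div, ← Finset.sum_sub_distrib]
    apply Finset.sum_congr rfl
    intro i _
    rw [hmdef]; ring
  have hpos : 0 < ∑ i, (x i - u i) ^ 2 := by
    apply Finset.sum_pos' (fun i _ => sq_nonneg _)
    refine ⟨i0, Finset.mem_univ _, ?_⟩
    have h := sub_ne_zero.mpr hi0
    positivity
  have hJ := sortedL1_midpoint lam hn hm x u
  have hlt : slopeObj lam y m < slopeObj lam y x := by
    unfold slopeObj
    rw [hquad]
    have hx' : slopeObj lam y x = (1/2) * ∑ i, (y i - x i) ^ 2 + sortedL1 lam x := rfl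
    have hu' : slopeObj lam y u = (1/2) * ∑ i, (y i - u i) ^ 2 + sortedL1 lam u := rfl
    have := hxu
    rw [hx', hu'] at this
    nlinarith [hJ, hpos]
  exact absurd (hx m) (not_le.mpr hlt)

lemma slopeObj_perm {p : ℕ} (lam y x : Fin p → ℝ) (e : Equiv.Perm (Fin p)) :
    slopeObj lam (y ∘ e) (x ∘ e) = slopeObj lam y x := by
  unfold slopeObj
  rw [sortedL1_perm]
  congr 1
  congr 1
  exact Equiv.sum_comp e (fun j => (y j - x j) ^ 2)

theorem statement16 {p : ℕ} (lam y : Fin p → ℝ)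
    (hn : ∀ i, 0 ≤ lam i) (hm : Monotone lam) :
    (∀ e : Equiv.Perm (Fin p), slopeProx lam (y ∘ e) = (slopeProx lam y) ∘ e) ∧
    (∀ i, slopeProx lam y i = Real.sign (y i) * slopeProx lam (fun j => |y j|) i) := by
  classical
  -- sign vector
  set s : Fin p → ℝ := fun i => if y i = 0 then 1 else Real.sign (y i) with hs
  have hs_sq : ∀ i, s i * s i = 1 := by
    intro i
    rw [hs]
    by_cases h : y i = 0
    · simp [h]
    · rcases lt_trichotomy (y i) 0 with h' | h' | h'
      · simp [h, Real.sign_of_neg h']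
      · exact absurd h' h
      · simp [h, Real.sign_of_pos h']
  have hs_abs : ∀ i, |s i| = 1 := by
    intro i
    have h1 : |s i| * |s i| = 1 := by rw [← abs_mul, hs_sq i, abs_one]
    rcases mul_self_eq_one_iff.mp h1 with h | h
    · exact h
    · have := abs_nonneg (s i); linarith
  have hs_mul_y : ∀ i, s i * y i = |y i| := by
    intro i
    by_cases h : y i = 0
    · simp [hs, h]
    · rcases lt_trichotomy (y i) 0 with h' | h' | h'
      · simp only [hs]
        rw [if_neg h, Real.sign_of_neg h', abs_of_neg h']; ring
      · exact absurd h' h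
      · simp only [hs]
        rw [if_neg h, Real.sign_of_pos h', abs_of_pos h']; ring
  -- objective under sign flips
  have obj_sign : ∀ z : Fin p → ℝ,
      slopeObj lam (fun j => |y j|) (fun i => s i * z i) = slopeObj lam y z := by
    intro z
    have hJ : sortedL1 lam (fun i => s i * z i) = sortedL1 lam z :=
      sortedL1_congr (x := fun i => s i * z i) (z := z) lam
        (fun i => by rw [abs_mul, hs_abs i, one_mul])
    unfold slopeObj
    rw [hJ]
    congr 1
    congr 1
    apply Finset.sum_congr rfl
    intro i _
    show (|y i| - s i * z i) ^ 2 = (y i - z i) ^ 2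
    rw [(hs_mul_y i).symm]
    linear_combination (y i - z i) ^ 2 * hs_sq i
  have obj_sign' : ∀ z : Fin p → ℝ,
      slopeObj lam y (fun i => s i * z i) = slopeObj lam (fun j => |y j|) z := by
    intro z
    have := obj_sign (fun i => s i * z i)
    have hzz : (fun i => s i * (s i * z i)) = z := by
      funext i
      rw [← mul_assoc, hs_sq i, one_mul]
    rw [hzz] at this
    exact this.symm
  constructor
  · -- permutation equivariance
    intro e
    by_cases h : ∃ x : Fin p → ℝ, ∀ z : Fin p → ℝ, slopeObj lam y x ≤ slopeObj lam y z
    · obtain ⟨u, hu⟩ := h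
      have hmin : ∀ z, slopeObj lam (y ∘ e) (u ∘ e) ≤ slopeObj lam (y ∘ e) z := by
        intro z
        have hz : (z ∘ e.symm) ∘ e = z := by funext i; simp
        calc slopeObj lam (y ∘ e) (u ∘ e) = slopeObj lam y u := slopeObj_perm lam y u e
          _ ≤ slopeObj lam y (z ∘ e.symm) := hu _
          _ = slopeObj lam (y ∘ e) ((z ∘ e.symm) ∘ e) := (slopeObj_perm lam y (z ∘ e.symm) e).symm
          _ = slopeObj lam (y ∘ e) z := by rw [hz]
      have h' : ∃ x : Fin p → ℝ, ∀ z : Fin p → ℝ,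
          slopeObj lam (y ∘ e) x ≤ slopeObj lam (y ∘ e) z := ⟨u ∘ e, hmin⟩
      have hhy : ∃ x : Fin p → ℝ, ∀ z : Fin p → ℝ,
          slopeObj lam y x ≤ slopeObj lam y z := ⟨u, hu⟩
      rw [slopeProx, slopeProx, dif_pos h', dif_pos hhy]
      have h1 : h'.choose = u ∘ e :=
        slope_min_unique lam (y ∘ e) hn hm h'.choose_spec hmin
      have h2 : hhy.choose = u :=
        slope_min_unique lam y hn hm hhy.choose_spec hu
      rw [h1, h2]
    · have h' : ¬ ∃ x : Fin p → ℝ, ∀ z : Fin p → ℝ,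
          slopeObj lam (y ∘ e) x ≤ slopeObj lam (y ∘ e) z := by
        rintro ⟨u, hu⟩
        apply h
        refine ⟨u ∘ e.symm, fun z => ?_⟩
        have h1 : slopeObj lam y (u ∘ e.symm) = slopeObj lam (y ∘ e) u := by
          have hz : (u ∘ e.symm) ∘ e = u := by funext i; simp
          rw [← slopeObj_perm lam y (u ∘ e.symm) e, hz]
        rw [h1, ← slopeObj_perm lam y z e]
        exact hu _
      rw [slopeProx, slopeProx, dif_neg h', dif_neg h]
  · -- sign relation
    intro i
    by_cases h : ∃ x : Fin p → ℝ, ∀ z : Fin p → ℝ, slopeObj lam y x ≤ slopeObj lam y z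
    · obtain ⟨u, hu⟩ := h
      -- minimizer for |y|
      have habs_min : ∀ z, slopeObj lam (fun j => |y j|) (fun i => s i * u i)
          ≤ slopeObj lam (fun j => |y j|) z := by
        intro z
        calc slopeObj lam (fun j => |y j|) (fun i => s i * u i) = slopeObj lam y u :=
              obj_sign u
          _ ≤ slopeObj lam y (fun i => s i * z i) := hu _
          _ = slopeObj lam (fun j => |y j|) z := obj_sign' z
      have h' : ∃ x : Fin p → ℝ, ∀ z : Fin p → ℝ,
          slopeObj lam (fun j => |y j|) x ≤ slopeObj lam (fun j => |y j|) z :=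
        ⟨_, habs_min⟩
      have hhy : ∃ x : Fin p → ℝ, ∀ z : Fin p → ℝ,
          slopeObj lam y x ≤ slopeObj lam y z := ⟨u, hu⟩
      rw [slopeProx, slopeProx, dif_pos h', dif_pos hhy]
      have h1 : h'.choose = fun i => s i * u i :=
        slope_min_unique lam (fun j => |y j|) hn hm h'.choose_spec habs_min
      have h2 : hhy.choose = u :=
        slope_min_unique lam y hn hm hhy.choose_spec hu
      rw [h1, h2]
      by_cases hy0 : y i = 0
      · -- show the |y|-minimizer has zero i-th coordinate
        set w : Fin p → ℝ := fun j => s j * u j with hwdef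
        have hw_min := habs_min
        set w' : Fin p → ℝ := Function.update w i (-(w i)) with hw'def
        have habsw : ∀ j, |w' j| = |w j| := by
          intro j
          by_cases hj : j = i
          · subst hj; rw [hw'def, Function.update_self, abs_neg]
          · rw [hw'def, Function.update_of_ne hj]
        have hobj : slopeObj lam (fun j => |y j|) w' = slopeObj lam (fun j => |y j|) w := by
          unfold slopeObj
          rw [sortedL1_congr lam habsw]
          congr 1
          congr 1
          apply Finset.sum_congr rfl
          intro j _
          by_cases hj : j = i
          · subst hj
            show (|y j| - w' j) ^ 2 = (|y j| - w j) ^ 2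
            rw [hw'def, Function.update_self, hy0, abs_zero]
            ring
          · rw [hw'def, Function.update_of_ne hj]
        have hw'_min : ∀ z, slopeObj lam (fun j => |y j|) w'
            ≤ slopeObj lam (fun j => |y j|) z := by
          intro z; rw [hobj]; exact hw_min z
        have heq : w' = w :=
          slope_min_unique lam (fun j => |y j|) hn hm hw'_min hw_min
        have hwi : w i = 0 := by
          have := congrFun heq i
          rw [hw'def, Function.update_self] at this
          linarith
        have hthis : s i * u i = 0 := hwi
        have hsne : s i ≠ 0 := by
          intro h0
          have hs2 := hs_sq i
          rw [h0] at hs2; norm_num at hs2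
        have hui : u i = 0 := by
          rcases mul_eq_zero.mp hthis with h | h
          · exact absurd h hsne
          · exact h
        show u i = Real.sign (y i) * w i
        rw [hui, hy0, Real.sign_zero]
        simp
      · have hsi : s i = Real.sign (y i) := by simp only [hs]; rw [if_neg hy0]
        show u i = Real.sign (y i) * (s i * u i)
        rw [hsi, ← mul_assoc, ← hsi, hs_sq i, one_mul]
    · have h' : ¬ ∃ x : Fin p → ℝ, ∀ z : Fin p → ℝ,
          slopeObj lam (fun j => |y j|) x ≤ slopeObj lam (fun j => |y j|) z := by
        rintro ⟨u, hu⟩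
        apply h
        refine ⟨fun i => s i * u i, fun z => ?_⟩
        calc slopeObj lam y (fun i => s i * u i) = slopeObj lam (fun j => |y j|) u :=
              obj_sign' u
          _ ≤ slopeObj lam (fun j => |y j|) (fun i => s i * z i) := hu _
          _ = slopeObj lam y z := obj_sign z
      rw [slopeProx, slopeProx, dif_neg h', dif_neg h]
      rcases lt_trichotomy (y i) 0 with h0 | h0 | h0
      · rw [Real.sign_of_neg h0, abs_of_neg h0]; ring
      · rw [h0]; simp
      · rw [Real.sign_of_pos h0, abs_of_pos h0]; ring
end
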